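/- arXiv:1707.06905 — 6 statements merged into one kernel-verified Lean document; each statement's English description precedes it below -/
import Mathlib

section
/- For the elephant random walk, E[X_n] = (2q-1) Γ(n + 2p - 1)/(Γ(2p) Γ(n)) for all n ≥ 1. -/
open MeasureTheory ProbabilityTheory Filter

/-- `a_n` coefficients of the ERW: `a_1 = 1` and
`a_n = Γ(n + 2p - 1)/(Γ(n) Γ(2p))` for `n ≥ 2`. -/
noncomputable def aERW (p : ℝ) (n : ℕ) : ℝ :=
  if n ≤ 1 then 1 else Real.Gamma ((n : ℝ) + (2 * p - 1)) / (Real.Gamma n * Real.Gamma (2 * p))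

/-- `s_n^2 = q(1-q) + ∑_{j=2}^n a_j^{-2}`. -/
noncomputable def sSqERW (p q : ℝ) (n : ℕ) : ℝ :=
  q * (1 - q) + ∑ j ∈ Finset.Icc 2 n, ((aERW p j)⁻¹) ^ 2

/-- The elephant random walk: a sequence of ±1 increments `η n` (for `n ≥ 1`; we set `η 0 = 0`)
on a probability space, with first step `+1` with probability `q`, and conditional law of
`η_{n+1}` given `η_1, …, η_n` equal to `(1/(2n)) ∑_{k=1}^n (1 + (2p-1) η_k η)`. -/
structure IsERW {Ω : Type*} [MeasurableSpace Ω] (μ : Measure Ω)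
    (p q : ℝ) (η : ℕ → Ω → ℝ) : Prop where
  isProb : IsProbabilityMeasure μ
  p_mem : p ∈ Set.Ioo (0 : ℝ) 1
  q_mem : q ∈ Set.Ioo (0 : ℝ) 1
  meas : ∀ n, Measurable (η n)
  zero : ∀ ω, η 0 ω = 0
  pm_one : ∀ n, 1 ≤ n → ∀ ω, η n ω = 1 ∨ η n ω = -1
  first : μ {ω | η 1 ω = 1} = ENNReal.ofReal q
  cond : ∀ n, 1 ≤ n → ∀ e : ℝ, (e = 1 ∨ e = -1) →
    (μ[Set.indicator {ω | η (n + 1) ω = e} (fun _ => (1 : ℝ)) |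
        MeasurableSpace.comap (fun ω (k : Finset.Icc 1 n) => η k ω) inferInstance])
      =ᵐ[μ] fun ω => (1 / (2 * (n : ℝ))) * ∑ k ∈ Finset.Icc 1 n, (1 + (2 * p - 1) * η k ω * e)

/-- Position of the ERW at time `n`. -/
noncomputable def erwX {Ω : Type*} (η : ℕ → Ω → ℝ) (n : ℕ) (ω : Ω) : ℝ :=
  ∑ k ∈ Finset.Icc 1 n, η k ω

/-- A standard one-dimensional Brownian motion. -/
structure IsStdBM {Ω : Type*} [MeasurableSpace Ω] (μ : Measure Ω) (W : ℝ → Ω → ℝ) : Prop where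
  isProb : IsProbabilityMeasure μ
  meas : ∀ t, Measurable (W t)
  init : ∀ᵐ ω ∂μ, W 0 ω = 0
  indep_incr : ∀ (n : ℕ) (t : ℕ → ℝ), Monotone t → 0 ≤ t 0 →
    iIndepFun
      (fun i : Fin n => fun ω => W (t (i + 1)) ω - W (t i) ω) μ
  gauss_incr : ∀ s t : ℝ, 0 ≤ s → s ≤ t →
    Measure.map (fun ω => W t ω - W s ω) μ = gaussianReal 0 (Real.toNNReal (t - s))
  cont : ∀ᵐ ω ∂μ, Continuous fun t => W t ω

section aux

variable {Ω : Type*} [MeasurableSpace Ω] {μ : Measure Ω} {p q : ℝ} {η : ℕ → Ω → ℝ}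

lemma eta_int (h : IsERW μ p q η) (k : ℕ) : Integrable (η k) μ := by
  have := h.isProb
  refine ⟨(h.meas k).aestronglyMeasurable, HasFiniteIntegral.of_bounded (C := 1) ?_⟩
  filter_upwards with ω
  rcases Nat.eq_zero_or_pos k with hk | hk
  · simp [hk, h.zero ω]
  · rcases h.pm_one k hk ω with he | he <;> simp [he]

lemma X_int (h : IsERW μ p q η) (n : ℕ) : Integrable (erwX η n) μ := by
  have : erwX η n = fun ω => ∑ k ∈ Finset.Icc 1 n, η k ω := rfl
  rw [this]
  exact integrable_finset_sum _ fun k _ => eta_int h k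

lemma measSet (h : IsERW μ p q η) (n : ℕ) (e : ℝ) : MeasurableSet {ω | η n ω = e} :=
  (h.meas n) (measurableSet_singleton e)

/-- integral of η (n+1) via the conditional law. -/
lemma eta_succ_mean (h : IsERW μ p q η) (n : ℕ) (hn : 1 ≤ n) :
    ∫ ω, η (n + 1) ω ∂μ = ((2 * p - 1) / n) * ∫ ω, erwX η n ω ∂μ := by
  have := h.isProb
  have hm : (MeasurableSpace.comap (fun ω (k : Finset.Icc 1 n) => η k ω) inferInstance)
      ≤ ‹MeasurableSpace Ω› :=
    Measurable.comap_le (measurable_pi_lambda _ fun k => h.meas k)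
  haveI : SigmaFinite (μ.trim hm) := by infer_instance
  have hRHSint : ∀ e : ℝ, Integrable
      (fun ω => (1 / (2 * (n : ℝ))) * ∑ k ∈ Finset.Icc 1 n, (1 + (2 * p - 1) * η k ω * e)) μ := by
    intro e
    refine Integrable.const_mul ?_ _
    refine integrable_finset_sum _ fun k _ => ?_
    exact (integrable_const 1).add (((eta_int h k).const_mul (2 * p - 1)).mul_const e)
  have key : ∀ e : ℝ, (e = 1 ∨ e = -1) →
      ∫ ω, Set.indicator {ω | η (n + 1) ω = e} (fun _ => (1 : ℝ)) ω ∂μ =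
      ∫ ω, (1 / (2 * (n : ℝ))) * ∑ k ∈ Finset.Icc 1 n, (1 + (2 * p - 1) * η k ω * e) ∂μ := by
    intro e he
    have hind : Integrable (Set.indicator {ω | η (n + 1) ω = e} (fun _ => (1 : ℝ))) μ :=
      (integrable_const 1).indicator (measSet h (n + 1) e)
    rw [← integral_condExp (μ := μ) (f := Set.indicator {ω | η (n + 1) ω = e} (fun _ => (1 : ℝ))) hm]
    exact integral_congr_ae (h.cond n hn e he)
  -- η (n+1) = ind_{=1} - ind_{=-1} pointwise
  have hpoint : ∀ ω, η (n + 1) ω =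
      Set.indicator {ω | η (n + 1) ω = 1} (fun _ => (1 : ℝ)) ω -
      Set.indicator {ω | η (n + 1) ω = -1} (fun _ => (1 : ℝ)) ω := by
    intro ω
    rcases h.pm_one (n + 1) (by omega) ω with he | he <;>
      norm_num [Set.indicator_apply, Set.mem_setOf_eq, he]
  have hint1 : Integrable (Set.indicator {ω | η (n + 1) ω = (1:ℝ)} (fun _ => (1 : ℝ))) μ :=
    (integrable_const 1).indicator (measSet h (n + 1) 1)
  have hint2 : Integrable (Set.indicator {ω | η (n + 1) ω = (-1:ℝ)} (fun _ => (1 : ℝ))) μ :=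
    (integrable_const 1).indicator (measSet h (n + 1) (-1))
  calc ∫ ω, η (n + 1) ω ∂μ
      = ∫ ω, (Set.indicator {ω | η (n + 1) ω = 1} (fun _ => (1 : ℝ)) ω -
          Set.indicator {ω | η (n + 1) ω = -1} (fun _ => (1 : ℝ)) ω) ∂μ := by
        exact integral_congr_ae (Filter.Eventually.of_forall hpoint)
    _ = (∫ ω, Set.indicator {ω | η (n + 1) ω = 1} (fun _ => (1 : ℝ)) ω ∂μ) -
        ∫ ω, Set.indicator {ω | η (n + 1) ω = -1} (fun _ => (1 : ℝ)) ω ∂μ :=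
        integral_sub hint1 hint2
    _ = (∫ ω, (1 / (2 * (n : ℝ))) * ∑ k ∈ Finset.Icc 1 n, (1 + (2 * p - 1) * η k ω * 1) ∂μ) -
        ∫ ω, (1 / (2 * (n : ℝ))) * ∑ k ∈ Finset.Icc 1 n, (1 + (2 * p - 1) * η k ω * (-1)) ∂μ := by
        rw [key 1 (Or.inl rfl), key (-1) (Or.inr rfl)]
    _ = ∫ ω, ((1 / (2 * (n : ℝ))) * ∑ k ∈ Finset.Icc 1 n, (1 + (2 * p - 1) * η k ω * 1) -
        (1 / (2 * (n : ℝ))) * ∑ k ∈ Finset.Icc 1 n, (1 + (2 * p - 1) * η k ω * (-1))) ∂μ :=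
        (integral_sub (hRHSint 1) (hRHSint (-1))).symm
    _ = ∫ ω, ((2 * p - 1) / n) * erwX η n ω ∂μ := by
        refine integral_congr_ae (Filter.Eventually.of_forall fun ω => ?_)
        have hne : (n : ℝ) ≠ 0 := Nat.cast_ne_zero.mpr (by omega)
        dsimp only [erwX]
        rw [← mul_sub, ← Finset.sum_sub_distrib]
        have : ∀ k ∈ Finset.Icc 1 n,
            (1 + (2 * p - 1) * η k ω * 1 - (1 + (2 * p - 1) * η k ω * (-1))) =
            (2 * (2 * p - 1)) * η k ω := fun k _ => by ring
        rw [Finset.sum_congr rfl this, ← Finset.mul_sum]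
        field_simp
    _ = ((2 * p - 1) / n) * ∫ ω, erwX η n ω ∂μ := integral_const_mul _ _

lemma eta_one_mean (h : IsERW μ p q η) : ∫ ω, η 1 ω ∂μ = 2 * q - 1 := by
  have := h.isProb
  have hcompl : {ω | η 1 ω = (-1:ℝ)} = {ω | η 1 ω = (1:ℝ)}ᶜ := by
    ext ω
    rcases h.pm_one 1 le_rfl ω with he | he <;> norm_num [he]
  have hμ1 : μ {ω | η 1 ω = (1:ℝ)} = ENNReal.ofReal q := h.first
  have hμ2 : μ {ω | η 1 ω = (-1:ℝ)} = 1 - ENNReal.ofReal q := by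
    rw [hcompl, measure_compl (measSet h 1 1) (measure_ne_top μ _), hμ1, measure_univ]
  have hq0 : 0 ≤ q := le_of_lt h.q_mem.1
  have hq1 : q ≤ 1 := le_of_lt h.q_mem.2
  have hpoint : ∀ ω, η 1 ω =
      Set.indicator {ω | η 1 ω = 1} (fun _ => (1 : ℝ)) ω -
      Set.indicator {ω | η 1 ω = -1} (fun _ => (1 : ℝ)) ω := by
    intro ω
    rcases h.pm_one 1 le_rfl ω with he | he <;>
      norm_num [Set.indicator_apply, Set.mem_setOf_eq, he]
  have hint1 : Integrable (Set.indicator {ω | η 1 ω = (1:ℝ)} (fun _ => (1 : ℝ))) μ :=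
    (integrable_const 1).indicator (measSet h 1 1)
  have hint2 : Integrable (Set.indicator {ω | η 1 ω = (-1:ℝ)} (fun _ => (1 : ℝ))) μ :=
    (integrable_const 1).indicator (measSet h 1 (-1))
  rw [integral_congr_ae (Filter.Eventually.of_forall hpoint), integral_sub hint1 hint2,
    integral_indicator_const _ (measSet h 1 1), integral_indicator_const _ (measSet h 1 (-1)),
    measureReal_def, measureReal_def, hμ1, hμ2]
  rw [ENNReal.toReal_sub_of_le (ENNReal.ofReal_le_one.mpr hq1) ENNReal.one_ne_top]
  simp [ENNReal.toReal_ofReal hq0]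
  ring

end aux

theorem erw_mean_aux {Ω : Type*} [MeasurableSpace Ω] {μ : Measure Ω}
    {p q : ℝ} {η : ℕ → Ω → ℝ} (h : IsERW μ p q η) (n : ℕ) (hn : 1 ≤ n) :
    ∫ ω, erwX η n ω ∂μ =
      (2 * q - 1) * Real.Gamma ((n : ℝ) + (2 * p - 1)) /
        (Real.Gamma (2 * p) * Real.Gamma n) := by
  have hΓ2p : Real.Gamma (2 * p) ≠ 0 :=
    ne_of_gt (Real.Gamma_pos_of_pos (by linarith [h.p_mem.1]))
  induction n, hn using Nat.le_induction with
  | base =>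
    have h1 : ∫ ω, erwX η 1 ω ∂μ = ∫ ω, η 1 ω ∂μ := by
      refine integral_congr_ae (Filter.Eventually.of_forall fun ω => ?_)
      simp [erwX]
    rw [h1, eta_one_mean h]
    have : (1 : ℝ) + (2 * p - 1) = 2 * p := by ring
    rw [Nat.cast_one, this, Real.Gamma_one]
    field_simp
  | succ n hn ih =>
    have hnR : (0:ℝ) < (n : ℝ) := by exact_mod_cast hn
    have hΓn : Real.Gamma (n : ℝ) ≠ 0 := ne_of_gt (Real.Gamma_pos_of_pos hnR)
    have h1n : (1:ℝ) ≤ (n : ℝ) := by exact_mod_cast hn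
    have hx : ((n : ℝ) + (2 * p - 1)) ≠ 0 := by
      have := h.p_mem.1; nlinarith [h.p_mem.1, h1n]
    have hsplit : ∫ ω, erwX η (n + 1) ω ∂μ =
        (∫ ω, erwX η n ω ∂μ) + ∫ ω, η (n + 1) ω ∂μ := by
      have : (fun ω => erwX η (n + 1) ω) = fun ω => erwX η n ω + η (n + 1) ω := by
        funext ω
        simp only [erwX]
        rw [Finset.sum_Icc_succ_top (by omega : 1 ≤ n + 1)]
      rw [this, integral_add (X_int h n) (eta_int h (n + 1))]
    rw [hsplit, eta_succ_mean h n hn, ih]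
    have hc1 : ((n + 1 : ℕ) : ℝ) = (n : ℝ) + 1 := by push_cast; ring
    have hc2 : ((n : ℝ) + 1) + (2 * p - 1) = ((n : ℝ) + (2 * p - 1)) + 1 := by ring
    rw [hc1, hc2, Real.Gamma_add_one hx, Real.Gamma_add_one (ne_of_gt hnR)]
    field_simp



/-- exact first moment of the ERW. -/
theorem erw_mean {Ω : Type*} [MeasurableSpace Ω] {μ : Measure Ω}
    {p q : ℝ} {η : ℕ → Ω → ℝ} (h : IsERW μ p q η) (n : ℕ) (hn : 1 ≤ n) :
    ∫ ω, erwX η n ω ∂μ =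
      (2 * q - 1) * Real.Gamma ((n : ℝ) + (2 * p - 1)) /
        (Real.Gamma (2 * p) * Real.Gamma n) := erw_mean_aux h n hn
end

section
/- For the elephant random walk with p < 3/4, E[X_n^2] ~ n/(3-4p) as n → ∞. -/
open MeasureTheory ProbabilityTheory Filter

private lemma erw_prod_div_tendsto {r : ℝ} (hr2 : -2 < r) (hr1 : r < 1) :
    Tendsto (fun n : ℕ => (∏ j ∈ Finset.Ico 2 n, (1 + r / j)) / n) atTop (nhds 0) := by
  set t : ℝ := max r 0 with ht
  have ht0 : 0 ≤ t := le_max_right _ _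
  have htr : r ≤ t := le_max_left _ _
  have ht1 : t < 1 := max_lt hr1 one_pos
  have hfac : ∀ j : ℕ, 2 ≤ j → 0 < 1 + r / (j : ℝ) := by
    intro j hj
    have hj' : (2 : ℝ) ≤ (j : ℝ) := by exact_mod_cast hj
    have hj0 : (0 : ℝ) < j := by linarith
    have e : 1 + r / (j : ℝ) = ((j : ℝ) + r) / j := by field_simp
    rw [e]
    exact div_pos (by linarith) hj0
  have hP : ∀ n : ℕ, 0 < ∏ j ∈ Finset.Ico 2 n, (1 + r / (j : ℝ)) := by
    intro n
    exact Finset.prod_pos fun j hj => hfac j (Finset.mem_Ico.mp hj).1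
  -- key log bound
  have hlog : ∀ n : ℕ, 2 ≤ n →
      Real.log (∏ j ∈ Finset.Ico 2 n, (1 + r / (j : ℝ))) ≤ t * Real.log ((n : ℝ) - 1) := by
    intro n hn
    induction n, hn using Nat.le_induction with
    | base => norm_num
    | succ n hn IH =>
      have hn2 : (2 : ℝ) ≤ (n : ℝ) := by exact_mod_cast hn
      have hn0 : (0 : ℝ) < n := by linarith
      rw [Finset.prod_Ico_succ_top hn]
      rw [Real.log_mul (hP n).ne' (hfac n hn).ne']
      have h1 : Real.log (1 + r / (n : ℝ)) ≤ r / n :=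
        (Real.log_le_sub_one_of_pos (hfac n hn)).trans_eq (by ring)
      have h2 : (1 : ℝ) / n ≤ Real.log (n : ℝ) - Real.log ((n : ℝ) - 1) := by
        have hpos : (0 : ℝ) < ((n : ℝ) - 1) / n := div_pos (by linarith) hn0
        have := Real.log_le_sub_one_of_pos hpos
        rw [Real.log_div (by linarith) hn0.ne'] at this
        have e : ((n : ℝ) - 1) / n - 1 = -(1 / n) := by field_simp; ring
        linarith [e ▸ this]
      have h3 : r / n ≤ t * (Real.log (n : ℝ) - Real.log ((n : ℝ) - 1)) := by
        calc r / n ≤ t / n := by gcongr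
        _ ≤ t * (Real.log (n : ℝ) - Real.log ((n : ℝ) - 1)) := by
            rw [div_eq_mul_one_div]
            exact mul_le_mul_of_nonneg_left h2 ht0
      have : ((n : ℝ) + 1) - 1 = (n : ℝ) := by ring
      push_cast
      rw [this]
      linarith
  -- product bound
  have hPb : ∀ n : ℕ, 2 ≤ n →
      (∏ j ∈ Finset.Ico 2 n, (1 + r / (j : ℝ))) ≤ (n : ℝ) ^ t := by
    intro n hn
    have hn2 : (2 : ℝ) ≤ (n : ℝ) := by exact_mod_cast hn
    have h1 : (∏ j ∈ Finset.Ico 2 n, (1 + r / (j : ℝ))) ≤ ((n : ℝ) - 1) ^ t := by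
      rw [← Real.exp_log (hP n), Real.rpow_def_of_pos (by linarith : (0:ℝ) < (n:ℝ) - 1)]
      exact Real.exp_le_exp.mpr ((hlog n hn).trans_eq (mul_comm _ _))
    refine h1.trans (Real.rpow_le_rpow (by linarith) (by linarith) ht0)
  -- squeeze
  have hlim : Tendsto (fun n : ℕ => (n : ℝ) ^ (t - 1)) atTop (nhds 0) := by
    have : Tendsto (fun x : ℝ => x ^ (-(1 - t))) atTop (nhds 0) :=
      tendsto_rpow_neg_atTop (by linarith)
    have := this.comp tendsto_natCast_atTop_atTop (α := ℕ)
    simpa [Function.comp_def, neg_sub] using this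
  refine squeeze_zero_norm' ?_ hlim
  filter_upwards [eventually_ge_atTop 2] with n hn
  have hn2 : (2 : ℝ) ≤ (n : ℝ) := by exact_mod_cast hn
  have hn0 : (0 : ℝ) < n := by linarith
  rw [Real.norm_eq_abs, abs_of_nonneg (div_nonneg (hP n).le hn0.le)]
  calc (∏ j ∈ Finset.Ico 2 n, (1 + r / (j : ℝ))) / n ≤ (n : ℝ) ^ t / n := by
        gcongr
        exact hPb n hn
    _ = (n : ℝ) ^ (t - 1) := by
        rw [Real.rpow_sub hn0, Real.rpow_one]

private lemma erw_integrable_of_bound {Ω : Type*} [MeasurableSpace Ω] {μ : Measure Ω}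
    [IsProbabilityMeasure μ] {f : Ω → ℝ} (hf : Measurable f) (C : ℝ)
    (hC : ∀ ω, |f ω| ≤ C) : Integrable f μ :=
  (integrable_const C).mono' hf.aestronglyMeasurable
    (Filter.Eventually.of_forall (by simpa [Real.norm_eq_abs] using hC))

private lemma erwX_meas {Ω : Type*} [MeasurableSpace Ω] {μ : Measure Ω}
    {p q : ℝ} {η : ℕ → Ω → ℝ} (h : IsERW μ p q η) (n : ℕ) :
    Measurable (erwX η n) :=
  Finset.measurable_sum _ fun k _ => h.meas k

private lemma erwX_abs_le {Ω : Type*} [MeasurableSpace Ω] {μ : Measure Ω}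
    {p q : ℝ} {η : ℕ → Ω → ℝ} (h : IsERW μ p q η) (n : ℕ) (ω : Ω) :
    |erwX η n ω| ≤ n := by
  have : |erwX η n ω| ≤ ∑ k ∈ Finset.Icc 1 n, |η k ω| := Finset.abs_sum_le_sum_abs _ _
  refine this.trans ?_
  have : ∑ k ∈ Finset.Icc 1 n, |η k ω| ≤ ∑ k ∈ Finset.Icc 1 n, (1 : ℝ) := by
    refine Finset.sum_le_sum fun k hk => ?_
    rcases h.pm_one k (Finset.mem_Icc.mp hk).1 ω with e | e <;> rw [e] <;> norm_num
  simpa [Nat.card_Icc] using this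

private abbrev erwSigma {Ω : Type*} [MeasurableSpace Ω] (η : ℕ → Ω → ℝ) (n : ℕ) :
    MeasurableSpace Ω :=
  MeasurableSpace.comap (fun ω (k : Finset.Icc 1 n) => η k ω) inferInstance

private lemma erw_moment_rec {Ω : Type*} [MeasurableSpace Ω] {μ : Measure Ω}
    {p q : ℝ} {η : ℕ → Ω → ℝ} (h : IsERW μ p q η) (n : ℕ) (hn : 1 ≤ n) :
    ∫ ω, (erwX η (n + 1) ω) ^ 2 ∂μ
      = (1 + 2 * (2 * p - 1) / n) * ∫ ω, (erwX η n ω) ^ 2 ∂μ + 1 := by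
  haveI := h.isProb
  have hn0 : (n : ℝ) ≠ 0 := by positivity
  set X : Ω → ℝ := erwX η n with hX
  set E : Ω → ℝ := η (n + 1) with hE
  have hm : erwSigma η n ≤ ‹MeasurableSpace Ω› := by
    unfold erwSigma
    exact Measurable.comap_le
      (measurable_pi_lambda (fun ω (k : Finset.Icc 1 n) => η k ω) fun k => h.meas k)
  -- X is m-measurable
  have hX_m : Measurable[erwSigma η n] X := by
    have h1 : Measurable[erwSigma η n] (fun ω (k : Finset.Icc 1 n) => η k ω) :=
      Measurable.of_comap_le le_rfl
    have h2 : Measurable (fun v : (Finset.Icc 1 n : Finset ℕ) → ℝ => ∑ k, v k) :=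
      Finset.measurable_sum _ fun k _ => measurable_pi_apply k
    have := h2.comp h1
    convert this using 1
    funext ω
    exact (Finset.sum_coe_sort (Finset.Icc 1 n) (fun k => η k ω)).symm
  -- integrability
  have hXint2 : Integrable (fun ω => X ω ^ 2) μ := by
    refine erw_integrable_of_bound (by exact (erwX_meas h n).pow_const 2) ((n : ℝ) ^ 2) fun ω => ?_
    rw [abs_pow]
    exact pow_le_pow_left₀ (abs_nonneg _) (erwX_abs_le h n ω) 2
  have hEint : Integrable E μ := by
    refine erw_integrable_of_bound (h.meas (n + 1)) 1 fun ω => ?_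
    rcases h.pm_one (n + 1) (by omega) ω with e | e <;> rw [hE, e] <;> norm_num
  have hXEint : Integrable (X * E) μ := by
    refine erw_integrable_of_bound ((erwX_meas h n).mul (h.meas (n + 1))) ((n : ℝ) * 1) fun ω => ?_
    rw [Pi.mul_apply, abs_mul]
    have h1 := erwX_abs_le h n ω
    have h2 : |E ω| ≤ 1 := by
      rcases h.pm_one (n + 1) (by omega) ω with e | e <;> rw [hE, e] <;> norm_num
    exact mul_le_mul h1 h2 (abs_nonneg _) (Nat.cast_nonneg n)
  have h2XE : Integrable (fun ω => 2 * (X ω * E ω)) μ := by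
    exact hXEint.const_mul 2
  -- indicator decomposition
  have hmeas1 : MeasurableSet {ω | η (n + 1) ω = (1 : ℝ)} :=
    measurableSet_eq_fun (h.meas (n + 1)) measurable_const
  have hmeas2 : MeasurableSet {ω | η (n + 1) ω = (-1 : ℝ)} :=
    measurableSet_eq_fun (h.meas (n + 1)) measurable_const
  have hI1 : Integrable (Set.indicator {ω | η (n + 1) ω = (1 : ℝ)} fun _ => (1 : ℝ)) μ :=
    (integrable_const 1).indicator hmeas1
  have hI2 : Integrable (Set.indicator {ω | η (n + 1) ω = (-1 : ℝ)} fun _ => (1 : ℝ)) μ :=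
    (integrable_const 1).indicator hmeas2
  have hdecomp : E = (Set.indicator {ω | η (n + 1) ω = (1 : ℝ)} fun _ => (1 : ℝ)) -
      (Set.indicator {ω | η (n + 1) ω = (-1 : ℝ)} fun _ => (1 : ℝ)) := by
    funext ω
    rcases h.pm_one (n + 1) (by omega) ω with e | e <;>
      simp [hE, Set.indicator_apply, Set.mem_setOf_eq, e] <;> norm_num
  -- conditional expectation of E
  have hcond : μ[E | erwSigma η n] =ᵐ[μ] fun ω => (2 * p - 1) / n * X ω := by
    have hc1 := h.cond n hn 1 (Or.inl rfl)
    have hc2 := h.cond n hn (-1) (Or.inr rfl)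
    have hsub := condExp_sub (m := erwSigma η n) (μ := μ) hI1 hI2
    have h0 : μ[E | erwSigma η n] =ᵐ[μ]
        μ[(Set.indicator {ω | η (n + 1) ω = (1 : ℝ)} fun _ => (1 : ℝ)) -
          (Set.indicator {ω | η (n + 1) ω = (-1 : ℝ)} fun _ => (1 : ℝ)) | erwSigma η n] :=
      condExp_congr_ae (Filter.Eventually.of_forall fun ω => by rw [hdecomp])
    refine h0.trans (hsub.trans ?_)
    filter_upwards [hc1, hc2] with ω h1 h2
    rw [Pi.sub_apply, h1, h2, ← mul_sub, ← Finset.sum_sub_distrib]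
    have e1 : ∑ k ∈ Finset.Icc 1 n,
        ((1 + (2 * p - 1) * η k ω * 1) - (1 + (2 * p - 1) * η k ω * (-1)))
        = (2 * (2 * p - 1)) * ∑ k ∈ Finset.Icc 1 n, η k ω := by
      rw [Finset.mul_sum]
      exact Finset.sum_congr rfl fun k _ => by ring
    rw [e1]
    rw [hX]
    show 1 / (2 * (n : ℝ)) * (2 * (2 * p - 1) * ∑ k ∈ Finset.Icc 1 n, η k ω)
        = (2 * p - 1) / n * ∑ k ∈ Finset.Icc 1 n, η k ω
    field_simp
  -- cross term
  have hcross : ∫ ω, X ω * E ω ∂μ = (2 * p - 1) / n * ∫ ω, X ω ^ 2 ∂μ := by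
    have hpull := condExp_mul_of_stronglyMeasurable_left (μ := μ)
      (Measurable.stronglyMeasurable hX_m) hXEint hEint
    calc ∫ ω, X ω * E ω ∂μ = ∫ ω, (μ[X * E | erwSigma η n]) ω ∂μ := (integral_condExp hm).symm
      _ = ∫ ω, X ω * (μ[E | erwSigma η n]) ω ∂μ := integral_congr_ae hpull
      _ = ∫ ω, (2 * p - 1) / n * X ω ^ 2 ∂μ := by
          refine integral_congr_ae ?_
          filter_upwards [hcond] with ω hω
          rw [hω]; ring
      _ = (2 * p - 1) / n * ∫ ω, X ω ^ 2 ∂μ := integral_const_mul _ _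
  -- expansion
  have hexp : ∀ ω, (erwX η (n + 1) ω) ^ 2 = X ω ^ 2 + (2 * (X ω * E ω) + 1) := by
    intro ω
    have hsum : erwX η (n + 1) ω = X ω + E ω := by
      rw [hX, hE, erwX, erwX, Finset.sum_Icc_succ_top (by omega : 1 ≤ n + 1)]
    have hsq : E ω ^ 2 = 1 := by
      rcases h.pm_one (n + 1) (by omega) ω with e | e <;> rw [hE, e] <;> norm_num
    rw [hsum]
    nlinarith [hsq]
  calc ∫ ω, (erwX η (n + 1) ω) ^ 2 ∂μ
      = ∫ ω, (X ω ^ 2 + (2 * (X ω * E ω) + 1)) ∂μ := by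
        exact integral_congr_ae (Filter.Eventually.of_forall hexp)
    _ = (∫ ω, X ω ^ 2 ∂μ) + ∫ ω, (2 * (X ω * E ω) + 1) ∂μ :=
        integral_add hXint2 (h2XE.add (integrable_const 1))
    _ = (∫ ω, X ω ^ 2 ∂μ) + ((∫ ω, 2 * (X ω * E ω) ∂μ) + ∫ _ω, (1 : ℝ) ∂μ) := by
        rw [integral_add h2XE (integrable_const 1)]
    _ = (∫ ω, X ω ^ 2 ∂μ) + (2 * ((2 * p - 1) / n * ∫ ω, X ω ^ 2 ∂μ) + 1) := by
        rw [integral_const_mul]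
        simp only [integral_const, measure_univ, probReal_univ, ENNReal.toReal_one, smul_eq_mul, one_mul]
        rw [hcross]
    _ = (1 + 2 * (2 * p - 1) / n) * ∫ ω, (erwX η n ω) ^ 2 ∂μ + 1 := by
        rw [hX]; ring

private lemma erw_fac_pos' {r : ℝ} (hr2 : -2 < r) {j : ℕ} (hj : 2 ≤ j) :
    0 < 1 + r / (j : ℝ) := by
  have hj' : (2 : ℝ) ≤ (j : ℝ) := by exact_mod_cast hj
  have hj0 : (0 : ℝ) < j := by linarith
  have e : 1 + r / (j : ℝ) = ((j : ℝ) + r) / j := by field_simp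
  rw [e]
  exact div_pos (by linarith) hj0

private lemma erw_moment_one {Ω : Type*} [MeasurableSpace Ω] {μ : Measure Ω}
    {p q : ℝ} {η : ℕ → Ω → ℝ} (h : IsERW μ p q η) :
    ∫ ω, (erwX η 1 ω) ^ 2 ∂μ = 1 := by
  haveI := h.isProb
  have hpt : ∀ ω, (erwX η 1 ω) ^ 2 = 1 := by
    intro ω
    have e1 : erwX η 1 ω = η 1 ω := by rw [erwX]; simp
    rw [e1]
    rcases h.pm_one 1 le_rfl ω with e | e <;> rw [e] <;> norm_num
  rw [integral_congr_ae (Filter.Eventually.of_forall hpt)]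
  simp

theorem erw_second_moment_diffusive' {Ω : Type*} [MeasurableSpace Ω] {μ : Measure Ω}
    {p q : ℝ} {η : ℕ → Ω → ℝ} (h : IsERW μ p q η) (hp : p < 3 / 4) :
    Tendsto (fun n : ℕ => (∫ ω, (erwX η n ω) ^ 2 ∂μ) / ((n : ℝ) / (3 - 4 * p)))
      atTop (nhds 1) := by
  haveI := h.isProb
  obtain ⟨hp0, -⟩ := h.p_mem
  set r : ℝ := 2 * (2 * p - 1) with hr
  have hr1 : r < 1 := by rw [hr]; linarith
  have hr2 : -2 < r := by rw [hr]; linarith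
  have h1r : (0 : ℝ) < 1 - r := by linarith
  have key : ∀ n : ℕ, 1 ≤ n →
      (∫ ω, (erwX η n ω) ^ 2 ∂μ) - n / (1 - r)
        = (1 - 1 / (1 - r)) * ∏ j ∈ Finset.Ico 1 n, (1 + r / (j : ℝ)) := by
    intro n hn
    induction n, hn using Nat.le_induction with
    | base => simp [erw_moment_one h]
    | succ n hn IH =>
      have hn0 : (n : ℝ) ≠ 0 := Nat.cast_ne_zero.mpr (by omega)
      have e : (∫ ω, (erwX η (n + 1) ω) ^ 2 ∂μ) - ((n : ℕ) + 1 : ℝ) / (1 - r)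
          = (1 + r / n) * ((∫ ω, (erwX η n ω) ^ 2 ∂μ) - n / (1 - r)) := by
        rw [erw_moment_rec h n hn, hr]
        have h1r' : (1 : ℝ) - 2 * (2 * p - 1) ≠ 0 := (by linarith : (0 : ℝ) < 1 - 2 * (2 * p - 1)).ne'
        field_simp [h1r']
        ring
      push_cast
      rw [e, IH, Finset.prod_Ico_succ_top hn]
      ring
  have hdn : Tendsto
      (fun n : ℕ => ((∫ ω, (erwX η n ω) ^ 2 ∂μ) - n / (1 - r)) / n) atTop (nhds 0) := by
    have hprod := (erw_prod_div_tendsto hr2 hr1).const_mul (|1 - 1 / (1 - r)| * |1 + r|)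
    rw [mul_zero] at hprod
    refine squeeze_zero_norm' ?_ hprod
    filter_upwards [eventually_ge_atTop 2] with n hn
    rw [key n (by omega)]
    have split : ∏ j ∈ Finset.Ico 1 n, (1 + r / (j : ℝ))
        = (1 + r / ((1 : ℕ) : ℝ)) * ∏ j ∈ Finset.Ico 2 n, (1 + r / (j : ℝ)) :=
      Finset.prod_eq_prod_Ico_succ_bot (by omega) _
    have hP : 0 ≤ ∏ j ∈ Finset.Ico 2 n, (1 + r / (j : ℝ)) :=
      Finset.prod_nonneg fun j hj => (erw_fac_pos' hr2 (Finset.mem_Ico.mp hj).1).le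
    rw [split]
    rw [Real.norm_eq_abs, abs_div, abs_mul, abs_mul, abs_of_nonneg hP,
      abs_of_nonneg (show (0:ℝ) ≤ (n:ℝ) from Nat.cast_nonneg n)]
    have e1 : |1 + r / ((1 : ℕ) : ℝ)| = |1 + r| := by norm_num
    rw [e1]
    apply le_of_eq
    ring
  have h34 : (3 : ℝ) - 4 * p = 1 - r := by rw [hr]; ring
  have hmain : ∀ᶠ n : ℕ in atTop,
      (1 - r) * (((∫ ω, (erwX η n ω) ^ 2 ∂μ) - n / (1 - r)) / n) + 1
        = (∫ ω, (erwX η n ω) ^ 2 ∂μ) / ((n : ℝ) / (3 - 4 * p)) := by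
    filter_upwards [eventually_ge_atTop 1] with n hn
    have hn0 : (n : ℝ) ≠ 0 := Nat.cast_ne_zero.mpr (by omega)
    rw [h34]
    field_simp
    ring
  have hlim : Tendsto
      (fun n : ℕ => (1 - r) * (((∫ ω, (erwX η n ω) ^ 2 ∂μ) - n / (1 - r)) / n) + 1)
      atTop (nhds ((1 - r) * 0 + 1)) :=
    (hdn.const_mul (1 - r)).add tendsto_const_nhds
  rw [mul_zero, zero_add] at hlim
  exact hlim.congr' hmain

/-- diffusive regime, `E[X_n^2] ~ n/(3-4p)` for `p < 3/4`. -/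
theorem erw_second_moment_diffusive {Ω : Type*} [MeasurableSpace Ω] {μ : Measure Ω}
    {p q : ℝ} {η : ℕ → Ω → ℝ} (h : IsERW μ p q η) (hp : p < 3 / 4) :
    Tendsto (fun n : ℕ => (∫ ω, (erwX η n ω) ^ 2 ∂μ) / ((n : ℝ) / (3 - 4 * p)))
      atTop (nhds 1) := erw_second_moment_diffusive' h hp
end

section
/- For the elephant random walk with p > 3/4, E[X_n^2] ~ n^{4p-2}/((4p-3) Γ(4p-2)) as n → ∞ (superdiffusive regime). -/
open MeasureTheory ProbabilityTheory Filter

lemma gammaProdAux (a : ℝ) (ha : 0 < a) (m : ℕ) :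
    Real.Gamma (a + m) = Real.Gamma a * ∏ j ∈ Finset.range m, (a + j) := by
  induction m with
  | zero => simp
  | succ m ih =>
      have h1 : a + (m : ℝ) ≠ 0 := by positivity
      have h2 : (a + ((m + 1 : ℕ) : ℝ)) = (a + m) + 1 := by push_cast; ring
      rw [h2, Real.Gamma_add_one h1, ih, Finset.prod_range_succ]
      ring

lemma tendstoAux (a : ℝ) (ha : 0 < a) :
    Tendsto (fun n : ℕ => Real.Gamma a / Real.GammaSeq a n) atTop (nhds 1) := by
  have hne : Real.Gamma a ≠ 0 := (Real.Gamma_pos_of_pos ha).ne'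
  have := (tendsto_const_nhds (x := Real.Gamma a) (f := atTop (α := ℕ))).div
    (Real.GammaSeq_tendsto_Gamma a) hne
  rw [div_self hne] at this
  exact this

lemma gammaSeqPos (a : ℝ) (ha : 0 < a) (n : ℕ) (hn : 1 ≤ n) : 0 < Real.GammaSeq a n := by
  rw [Real.GammaSeq]
  have h1 : (0:ℝ) < (n:ℝ) ^ a := Real.rpow_pos_of_pos (by exact_mod_cast hn) a
  have h2 : (0:ℝ) < ∏ j ∈ Finset.range (n+1), (a + j) :=
    Finset.prod_pos fun j _ => by positivity
  positivity

/-- The second-moment recurrence for the ERW. -/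
lemma erw_recurrence {Ω : Type*} [m0 : MeasurableSpace Ω] {μ : Measure Ω}
    {p q : ℝ} {η : ℕ → Ω → ℝ} (h : IsERW μ p q η) (n : ℕ) (hn : 1 ≤ n) :
    ∫ ω, (erwX η (n+1) ω) ^ 2 ∂μ
      = (1 + 2 * (2*p-1) / n) * ∫ ω, (erwX η n ω) ^ 2 ∂μ + 1 := by
  haveI := h.isProb
  have hb : ∀ k ω, |η k ω| ≤ 1 := by
    intro k ω
    rcases Nat.eq_zero_or_pos k with hk | hk
    · simp [hk, h.zero ω]
    · rcases h.pm_one k hk ω with h1 | h1 <;> simp [h1]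
  have hmeasX : ∀ m, Measurable (erwX η m) := fun m =>
    Finset.measurable_sum _ fun k _ => h.meas k
  have hbX : ∀ m ω, |erwX η m ω| ≤ m := by
    intro m ω
    calc |∑ k ∈ Finset.Icc 1 m, η k ω| ≤ ∑ k ∈ Finset.Icc 1 m, |η k ω| :=
          Finset.abs_sum_le_sum_abs _ _
      _ ≤ ∑ _k ∈ Finset.Icc 1 m, 1 := Finset.sum_le_sum fun k _ => hb k ω
      _ ≤ m := by simp [Nat.card_Icc]
  have hInt : ∀ (f : Ω → ℝ) (C : ℝ), Measurable f → (∀ ω, |f ω| ≤ C) → Integrable f μ := by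
    intro f C hf hC
    exact (integrable_const C).mono' hf.aestronglyMeasurable
      (Filter.Eventually.of_forall fun ω => by simpa using hC ω)
  have hn0 : ((n:ℝ)) ≠ 0 := Nat.cast_ne_zero.mpr (by omega)
  have hπ : Measurable (fun ω (k : Finset.Icc 1 n) => η k ω) :=
    measurable_pi_lambda _ fun k => h.meas k
  have hGle : MeasurableSpace.comap (fun ω (k : Finset.Icc 1 n) => η k ω) inferInstance ≤ m0 := measurable_iff_comap_le.mp hπ
  haveI : SigmaFinite (μ.trim hGle) := (isFiniteMeasure_trim hGle).toSigmaFinite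
  -- X_n is G-strongly measurable
  have hXG : StronglyMeasurable[MeasurableSpace.comap (fun ω (k : Finset.Icc 1 n) => η k ω) inferInstance] (erwX η n) := by
    have hev : ∀ k : Finset.Icc 1 n, Measurable[MeasurableSpace.comap (fun ω (k : Finset.Icc 1 n) => η k ω) inferInstance] (η (k : ℕ)) := by
      intro k
      have hk : η (k : ℕ) = (fun v : Finset.Icc 1 n → ℝ => v k) ∘
          (fun ω (j : Finset.Icc 1 n) => η j ω) := rfl
      rw [hk]
      exact (measurable_pi_apply k).comp (Measurable.of_comap_le le_rfl)
    have hsum : erwX η n = fun ω => ∑ k ∈ (Finset.Icc 1 n).attach, η (k : ℕ) ω := by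
      funext ω
      exact (Finset.sum_attach _ _).symm
    rw [hsum]
    exact (Finset.measurable_sum _ fun k _ => hev k).stronglyMeasurable
  -- the conditional expectation of η (n+1)
  have hA : MeasurableSet {ω | η (n+1) ω = 1} :=
    measurableSet_eq_fun (h.meas (n+1)) measurable_const
  have hB : MeasurableSet {ω | η (n+1) ω = -1} :=
    measurableSet_eq_fun (h.meas (n+1)) measurable_const
  have hiA : Integrable (Set.indicator {ω | η (n+1) ω = 1} (fun _ => (1:ℝ))) μ :=
    hInt _ 1 (measurable_const.indicator hA) (fun ω => by
      by_cases hω : ω ∈ {ω | η (n+1) ω = 1} <;> simp [Set.indicator_apply, hω])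
  have hiB : Integrable (Set.indicator {ω | η (n+1) ω = -1} (fun _ => (1:ℝ))) μ :=
    hInt _ 1 (measurable_const.indicator hB) (fun ω => by
      by_cases hω : ω ∈ {ω | η (n+1) ω = -1} <;> simp [Set.indicator_apply, hω])
  have hsplit : η (n+1) = fun ω => Set.indicator {ω | η (n+1) ω = 1} (fun _ => (1:ℝ)) ω
      - Set.indicator {ω | η (n+1) ω = -1} (fun _ => (1:ℝ)) ω := by
    funext ω
    rcases h.pm_one (n+1) (by omega) ω with h1 | h1 <;>
      simp [Set.indicator_apply, Set.mem_setOf_eq, h1] <;> norm_num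
  have hEη : μ[η (n+1) | MeasurableSpace.comap (fun ω (k : Finset.Icc 1 n) => η k ω) inferInstance] =ᵐ[μ] fun ω => ((2*p-1) / n) * erwX η n ω := by
    have h1 := h.cond n hn 1 (Or.inl rfl)
    have h2 := h.cond n hn (-1) (Or.inr rfl)
    calc μ[η (n+1) | MeasurableSpace.comap (fun ω (k : Finset.Icc 1 n) => η k ω) inferInstance]
        = μ[(fun ω => Set.indicator {ω | η (n+1) ω = 1} (fun _ => (1:ℝ)) ω
            - Set.indicator {ω | η (n+1) ω = -1} (fun _ => (1:ℝ)) ω) | MeasurableSpace.comap (fun ω (k : Finset.Icc 1 n) => η k ω) inferInstance] := by rw [← hsplit]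
      _ =ᵐ[μ] fun ω => (μ[Set.indicator {ω | η (n+1) ω = 1} (fun _ => (1:ℝ)) | MeasurableSpace.comap (fun ω (k : Finset.Icc 1 n) => η k ω) inferInstance]) ω
            - (μ[Set.indicator {ω | η (n+1) ω = -1} (fun _ => (1:ℝ)) | MeasurableSpace.comap (fun ω (k : Finset.Icc 1 n) => η k ω) inferInstance]) ω :=
          condExp_sub hiA hiB _
      _ =ᵐ[μ] fun ω => ((2*p-1) / n) * erwX η n ω := by
          filter_upwards [h1, h2] with ω hω1 hω2
          rw [hω1, hω2, ← mul_sub, ← Finset.sum_sub_distrib]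
          have : ∀ x : ℝ, (1 + (2*p-1) * x * 1) - (1 + (2*p-1) * x * (-1)) = 2*(2*p-1)*x :=
            fun x => by ring
          simp_rw [this]
          rw [← Finset.mul_sum, erwX]
          field_simp
  -- integrability facts
  have hXint2 : Integrable (fun ω => (erwX η n ω)^2) μ :=
    hInt _ ((n:ℝ)^2) ((hmeasX n).pow_const 2) (fun ω => by
      rw [abs_pow]
      exact pow_le_pow_left₀ (abs_nonneg _) (hbX n ω) 2)
  have hcross : Integrable (fun ω => erwX η n ω * η (n+1) ω) μ :=
    hInt _ ((n:ℝ)) ((hmeasX n).mul (h.meas (n+1))) (fun ω => by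
      rw [abs_mul]
      calc |erwX η n ω| * |η (n+1) ω| ≤ (n:ℝ) * 1 :=
            mul_le_mul (hbX n ω) (hb (n+1) ω) (abs_nonneg _) (Nat.cast_nonneg n)
        _ = n := mul_one _)
  -- pointwise expansion
  have key : ∫ ω, (erwX η (n+1) ω)^2 ∂μ
      = ∫ ω, ((erwX η n ω)^2 + (2 * (erwX η n ω * η (n+1) ω) + 1)) ∂μ := by
    refine integral_congr_ae (Filter.Eventually.of_forall fun ω => ?_)
    have hXsucc : erwX η (n+1) ω = erwX η n ω + η (n+1) ω := by
      rw [erwX, erwX, Finset.sum_Icc_succ_top (by omega : 1 ≤ n+1)]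
    have hsq1 : (η (n+1) ω)^2 = 1 := by
      rcases h.pm_one (n+1) (by omega) ω with h1 | h1 <;> rw [h1] <;> norm_num
    dsimp only
    rw [hXsucc]
    linear_combination hsq1
  -- the cross term
  have hcrossval : ∫ ω, erwX η n ω * η (n+1) ω ∂μ
      = ((2*p-1)/n) * ∫ ω, (erwX η n ω)^2 ∂μ := by
    have hcross' : Integrable (erwX η n * η (n+1)) μ := hcross
    have hpull := condExp_mul_of_stronglyMeasurable_left (μ := μ) hXG hcross'
      (hInt _ 1 (h.meas (n+1)) (hb (n+1)))
    calc ∫ ω, erwX η n ω * η (n+1) ω ∂μ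
        = ∫ ω, (μ[erwX η n * η (n+1) | MeasurableSpace.comap (fun ω (k : Finset.Icc 1 n) => η k ω) inferInstance]) ω ∂μ :=
          (integral_condExp hGle).symm
      _ = ∫ ω, erwX η n ω * (((2*p-1)/n) * erwX η n ω) ∂μ := by
          refine integral_congr_ae ?_
          filter_upwards [hpull, hEη] with ω h1 h2
          rw [h1, Pi.mul_apply, h2]
      _ = ((2*p-1)/n) * ∫ ω, (erwX η n ω)^2 ∂μ := by
          simp_rw [show ∀ x : ℝ, x * (((2*p-1)/n) * x) = ((2*p-1)/n) * x^2 from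
            fun x => by ring]
          exact integral_const_mul _ _
  have e1 : ∫ ω, ((erwX η n ω)^2 + (2 * (erwX η n ω * η (n+1) ω) + 1)) ∂μ
      = (∫ ω, (erwX η n ω)^2 ∂μ) + ∫ ω, (2 * (erwX η n ω * η (n+1) ω) + 1) ∂μ :=
    integral_add hXint2 ((hcross.const_mul 2).add (integrable_const 1))
  have e2 : ∫ ω, (2 * (erwX η n ω * η (n+1) ω) + 1) ∂μ
      = (∫ ω, 2 * (erwX η n ω * η (n+1) ω) ∂μ) + ∫ _ω, (1:ℝ) ∂μ :=
    integral_add (hcross.const_mul 2) (integrable_const 1)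
  have e3 : ∫ ω, 2 * (erwX η n ω * η (n+1) ω) ∂μ = 2 * ∫ ω, erwX η n ω * η (n+1) ω ∂μ :=
    integral_const_mul 2 _
  have e4 : ∫ _ω, (1:ℝ) ∂μ = 1 := by simp [measure_univ]
  rw [key, e1, e2, e3, e4, hcrossval]
  ring

/-- superdiffusive regime, `E[X_n^2] ~ n^{4p-2}/((4p-3)Γ(4p-2))` for `p > 3/4`. -/
theorem erw_second_moment_superdiffusive {Ω : Type*} [MeasurableSpace Ω] {μ : Measure Ω}
    {p q : ℝ} {η : ℕ → Ω → ℝ} (h : IsERW μ p q η) (hp : 3 / 4 < p) :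
    Tendsto (fun n : ℕ =>
        (∫ ω, (erwX η n ω) ^ 2 ∂μ) /
          ((n : ℝ) ^ (4 * p - 2) / ((4 * p - 3) * Real.Gamma (4 * p - 2))))
      atTop (nhds 1) := by
  haveI := h.isProb
  have hp1 : p < 1 := h.p_mem.2
  have ha : (0:ℝ) < 4*p - 3 := by linarith
  have hΓ2pos : 0 < Real.Gamma (4*p-2) := Real.Gamma_pos_of_pos (by linarith)
  -- closed form
  have hform : ∀ n : ℕ, ∫ ω, (erwX η (n+1) ω)^2 ∂μ
      = (((n:ℝ)+1) / (4*p-3)) *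
        (Real.Gamma (((n:ℝ)+1) + (4*p-2)) / (Real.Gamma (4*p-2) * Real.Gamma (((n:ℝ)+1)+1)) - 1) := by
    intro n
    induction n with
    | zero =>
      have hX1 : ∀ ω, (erwX η 1 ω)^2 = 1 := by
        intro ω
        have : erwX η 1 ω = η 1 ω := by rw [erwX]; simp
        rw [this]
        rcases h.pm_one 1 le_rfl ω with h1 | h1 <;> rw [h1] <;> norm_num
      have : ∫ ω, (erwX η 1 ω)^2 ∂μ = 1 := by
        rw [integral_congr_ae (Filter.Eventually.of_forall hX1)]
        simp [measure_univ]
      rw [this, Nat.cast_zero]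
      have hg1 : Real.Gamma ((0:ℝ)+1 + (4*p-2)) = (4*p-2) * Real.Gamma (4*p-2) := by
        rw [show (0:ℝ)+1 + (4*p-2) = (4*p-2) + 1 by ring, Real.Gamma_add_one (by linarith)]
      have hg2 : Real.Gamma ((0:ℝ)+1+1) = 1 := by norm_num [Real.Gamma_two]
      rw [hg1, hg2]
      field_simp
      ring
    | succ m ih =>
      have hrec := erw_recurrence h (m+1) (by omega)
      rw [ih] at hrec
      rw [hrec]
      have hs : ((m:ℝ)+1) ≠ 0 := by positivity
      have hΓn : Real.Gamma (((m:ℝ)+1)+1) ≠ 0 := (Real.Gamma_pos_of_pos (by positivity)).ne'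
      have hm0 : (0:ℝ) ≤ (m:ℝ) := Nat.cast_nonneg m
      have hgtop : Real.Gamma ((((m+1:ℕ):ℝ)+1) + (4*p-2))
          = (((m:ℝ)+1) + (4*p-2)) * Real.Gamma (((m:ℝ)+1) + (4*p-2)) := by
        rw [show (((m+1:ℕ):ℝ)+1) + (4*p-2) = (((m:ℝ)+1) + (4*p-2)) + 1 by push_cast; ring,
          Real.Gamma_add_one (ne_of_gt (by nlinarith))]
      have hgbot : Real.Gamma ((((m+1:ℕ):ℝ)+1)+1) = (((m:ℝ)+1)+1) * Real.Gamma (((m:ℝ)+1)+1) := by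
        rw [show (((m+1:ℕ):ℝ)+1)+1 = ((((m:ℝ)+1)+1)) + 1 by push_cast; ring,
          Real.Gamma_add_one (by positivity)]
      rw [hgtop, hgbot]
      have hcast : ((m+1:ℕ):ℝ) = (m:ℝ)+1 := by push_cast; ring
      rw [hcast]
      have ha3 : (4*p-3:ℝ) ≠ 0 := ha.ne'
      field_simp
      linear_combination (-Real.Gamma ((m:ℝ)+1+1)) * mul_inv_cancel₀ ha3
  -- limit
  set a := 4*p - 3 with hadef
  have hkey : ∀ n : ℕ, 1 ≤ n →
      (∫ ω, (erwX η n ω) ^ 2 ∂μ) /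
          ((n : ℝ) ^ (4 * p - 2) / ((4 * p - 3) * Real.Gamma (4 * p - 2)))
      = Real.Gamma a / Real.GammaSeq a n - Real.Gamma (4*p-2) * (n:ℝ) ^ (-a) := by
    intro n hn
    obtain ⟨m, rfl⟩ := Nat.exists_eq_add_of_le hn
    have hval := hform m
    rw [show 1 + m = m + 1 by omega] at *
    have hcast : ((m+1:ℕ):ℝ) = (m:ℝ)+1 := by push_cast; ring
    rw [hval]
    have npos : (0:ℝ) < ((m+1:ℕ):ℝ) := by positivity
    -- rewrite Gamma (n + 4p-2) using the product
    have hGtop : Real.Gamma (((m:ℝ)+1) + (4*p-2))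
        = Real.Gamma a * ∏ j ∈ Finset.range (m+1+1), (a + j) := by
      rw [show ((m:ℝ)+1) + (4*p-2) = a + ((m+1+1 : ℕ):ℝ) by push_cast; ring]
      exact gammaProdAux a ha _
    have hGbot : Real.Gamma (((m:ℝ)+1)+1) = (Nat.factorial (m+1) : ℝ) := by
      rw [show ((m:ℝ)+1)+1 = (((m+1:ℕ):ℝ))+1 by push_cast; ring]
      exact_mod_cast Real.Gamma_nat_eq_factorial (m+1)
    have npos' : (0:ℝ) < (m:ℝ)+1 := by positivity
    have hrpow : ((m:ℝ)+1) ^ (4*p-2) = ((m:ℝ)+1) ^ a * ((m:ℝ)+1) := by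
      rw [show (4*p-2 : ℝ) = a + 1 by rw [hadef]; ring, Real.rpow_add npos', Real.rpow_one]
    have hrneg : ((m:ℝ)+1) ^ (-a) = (((m:ℝ)+1) ^ a)⁻¹ := by
      rw [Real.rpow_neg npos'.le]
    have hSeq : Real.GammaSeq a (m+1)
        = ((m:ℝ)+1) ^ a * (Nat.factorial (m+1) : ℝ) / ∏ j ∈ Finset.range (m+1+1), (a + j) := by
      rw [Real.GammaSeq]
      push_cast
      ring_nf
    have hprodpos : (0:ℝ) < ∏ j ∈ Finset.range (m+1+1), (a + j) :=
      Finset.prod_pos fun j _ => by positivity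
    have hrpos : (0:ℝ) < ((m:ℝ)+1) ^ a := Real.rpow_pos_of_pos npos' a
    have hfac : (0:ℝ) < (Nat.factorial (m+1) : ℝ) := by positivity
    rw [hcast, hGtop, hGbot, hrpow, hrneg, hSeq]
    field_simp
    ring
  have h1 := tendstoAux a ha
  have h2 : Tendsto (fun n : ℕ => Real.Gamma (4*p-2) * (n:ℝ) ^ (-a)) atTop (nhds 0) := by
    have hr : Tendsto (fun x : ℝ => x ^ (-a)) atTop (nhds 0) := tendsto_rpow_neg_atTop ha
    have := (hr.comp tendsto_natCast_atTop_atTop).const_mul (Real.Gamma (4*p-2))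
    simpa using this
  have h3 := h1.sub h2
  rw [sub_zero] at h3
  refine h3.congr' ?_
  filter_upwards [eventually_ge_atTop 1] with n hn
  exact (hkey n hn).symm
end

section
/- Let s_n^2 = q(1-q) + Σ_{j=2}^n 1/a_j^2 with a_j = Γ(j + 2p - 1)/(Γ(j) Γ(2p)). If p < 3/4, then s_n^2 ~ Γ(2p)^2 n^{3-4p}/(3-4p) as n → ∞. -/
open MeasureTheory ProbabilityTheory Filter
open Topology

open Real Topology in
lemma gammaRatio_tendsto_of_Ioo {x : ℝ} (hx0 : 0 < x) (hx1 : x < 1) :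
    Tendsto (fun n : ℕ => Real.Gamma (n + x) / (Real.Gamma n * (n : ℝ) ^ x)) atTop (𝓝 1) := by
  have hconv := Real.convexOn_log_Gamma
  have hlow : Tendsto (fun n : ℕ => ((n : ℝ) / ((n : ℝ) + x)) ^ (1 - x)) atTop (𝓝 1) := by
    have h1 : Tendsto (fun n : ℕ => (n : ℝ) / ((n : ℝ) + x)) atTop (𝓝 1) :=
      tendsto_natCast_div_add_atTop x
    have h2 : ContinuousAt (fun y : ℝ => y ^ (1 - x)) 1 :=
      Real.continuousAt_rpow_const 1 (1 - x) (Or.inl one_ne_zero)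
    have := h2.tendsto.comp h1
    rw [Real.one_rpow] at this
    exact this
  refine tendsto_of_tendsto_of_tendsto_of_le_of_le' hlow tendsto_const_nhds ?_ ?_
  · -- lower bound, eventually
    filter_upwards [eventually_ge_atTop 1] with n hn
    have hnpos : (0 : ℝ) < n := by exact_mod_cast hn
    have hnx : (0 : ℝ) < (n : ℝ) + x := by linarith
    have hΓn : 0 < Real.Gamma n := Real.Gamma_pos_of_pos hnpos
    have hΓnx : 0 < Real.Gamma ((n : ℝ) + x) := Real.Gamma_pos_of_pos hnx
    -- convexity: log Γ(n+1) ≤ x log Γ(n+x) + (1-x) log Γ(n+1+x)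
    have hc := hconv.2 (Set.mem_Ioi.2 hnx) (Set.mem_Ioi.2 (by linarith : (0:ℝ) < (n:ℝ) + x + 1))
      (le_of_lt hx0) (by linarith : (0:ℝ) ≤ 1 - x) (by ring)
    have heq : x • ((n:ℝ) + x) + (1 - x) • ((n:ℝ) + x + 1) = (n:ℝ) + 1 := by
      simp [smul_eq_mul]; ring
    rw [heq] at hc
    simp only [Function.comp_apply, smul_eq_mul] at hc
    have hΓ1 : Real.Gamma ((n:ℝ) + 1) = n * Real.Gamma n := Real.Gamma_add_one hnpos.ne'
    have hΓ2 : Real.Gamma ((n:ℝ) + x + 1) = ((n:ℝ) + x) * Real.Gamma ((n:ℝ) + x) :=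
      Real.Gamma_add_one hnx.ne'
    rw [hΓ1, hΓ2, Real.log_mul hnpos.ne' hΓn.ne', Real.log_mul hnx.ne' hΓnx.ne'] at hc
    -- hc : log n + log Γ n ≤ x * log Γ(n+x) + (1-x) * (log (n+x) + log Γ(n+x))
    have hc' : Real.log n + Real.log (Real.Gamma n)
        ≤ Real.log (Real.Gamma ((n:ℝ) + x)) + (1 - x) * Real.log ((n:ℝ) + x) := by nlinarith [hc]
    -- exponentiate
    have := Real.exp_le_exp.2 hc'
    rw [Real.exp_add, Real.exp_add, Real.exp_log hnpos, Real.exp_log hΓn,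
      Real.exp_log hΓnx] at this
    have hexp : Real.exp ((1 - x) * Real.log ((n:ℝ) + x)) = ((n:ℝ) + x) ^ (1 - x) := by
      rw [Real.rpow_def_of_pos hnx, mul_comm]
    rw [hexp] at this
    -- this : n * Γ n ≤ Γ(n+x) * (n+x)^(1-x)
    rw [Real.div_rpow hnpos.le hnx.le, div_le_div_iff₀ (by positivity) (by positivity)]
    calc (n:ℝ) ^ (1-x) * (Real.Gamma n * (n:ℝ) ^ x)
        = ((n:ℝ) ^ (1-x) * (n:ℝ) ^ x) * Real.Gamma n := by ring
      _ = (n:ℝ) * Real.Gamma n := by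
          rw [← Real.rpow_add hnpos]; norm_num
      _ ≤ Real.Gamma ((n:ℝ) + x) * ((n:ℝ) + x) ^ (1 - x) := this
  · -- upper bound, eventually
    filter_upwards [eventually_ge_atTop 1] with n hn
    have hnpos : (0 : ℝ) < n := by exact_mod_cast hn
    have hnx : (0 : ℝ) < (n : ℝ) + x := by linarith
    have hΓn : 0 < Real.Gamma n := Real.Gamma_pos_of_pos hnpos
    have hΓnx : 0 < Real.Gamma ((n : ℝ) + x) := Real.Gamma_pos_of_pos hnx
    have hc := hconv.2 (Set.mem_Ioi.2 hnpos) (Set.mem_Ioi.2 (by linarith : (0:ℝ) < (n:ℝ) + 1))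
      (by linarith : (0:ℝ) ≤ 1 - x) (le_of_lt hx0) (by ring)
    have heq : (1 - x) • (n:ℝ) + x • ((n:ℝ) + 1) = (n:ℝ) + x := by
      simp [smul_eq_mul]; ring
    rw [heq] at hc
    simp only [Function.comp_apply, smul_eq_mul] at hc
    have hΓ1 : Real.Gamma ((n:ℝ) + 1) = n * Real.Gamma n := Real.Gamma_add_one hnpos.ne'
    rw [hΓ1, Real.log_mul hnpos.ne' hΓn.ne'] at hc
    have hc' : Real.log (Real.Gamma ((n:ℝ) + x))
        ≤ Real.log (Real.Gamma n) + x * Real.log n := by nlinarith [hc]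
    have := Real.exp_le_exp.2 hc'
    rw [Real.exp_log hΓnx, Real.exp_add, Real.exp_log hΓn] at this
    have hexp : Real.exp (x * Real.log n) = (n:ℝ) ^ x := by
      rw [Real.rpow_def_of_pos hnpos, mul_comm]
    rw [hexp] at this
    rw [div_le_one (by positivity)]
    exact this

open Real Topology in
lemma gammaRatio_tendsto {x : ℝ} (hx0 : -1 < x) (hx1 : x < 1) :
    Tendsto (fun n : ℕ => Real.Gamma (n + x) / (Real.Gamma n * (n : ℝ) ^ x)) atTop (𝓝 1) := by
  rcases lt_trichotomy x 0 with h | h | h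
  · have h1 := gammaRatio_tendsto_of_Ioo (by linarith : (0:ℝ) < x + 1) (by linarith)
    have h2 : Tendsto (fun n : ℕ => (n:ℝ) / ((n:ℝ) + x)) atTop (𝓝 1) :=
      tendsto_natCast_div_add_atTop x
    have h3 := h1.mul h2
    rw [mul_one] at h3
    refine h3.congr' ?_
    filter_upwards [eventually_ge_atTop 1] with n hn
    have hnpos : (0 : ℝ) < n := by exact_mod_cast hn
    have hnx : (0 : ℝ) < (n : ℝ) + x := by
      have : (1:ℝ) ≤ n := by exact_mod_cast hn
      linarith
    have hΓn : 0 < Real.Gamma n := Real.Gamma_pos_of_pos hnpos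
    have hΓnx : 0 < Real.Gamma ((n : ℝ) + x) := Real.Gamma_pos_of_pos hnx
    have e1 : (n:ℝ) + (x + 1) = ((n:ℝ) + x) + 1 := by ring
    simp only [e1, Real.Gamma_add_one hnx.ne', Real.rpow_add hnpos, Real.rpow_one]
    have hnx' : (n:ℝ) ^ x ≠ 0 := (Real.rpow_pos_of_pos hnpos x).ne'
    field_simp
  · subst h
    refine tendsto_const_nhds.congr' ?_
    filter_upwards [eventually_ge_atTop 1] with n hn
    have hnpos : (0 : ℝ) < n := by exact_mod_cast hn
    have hΓn : 0 < Real.Gamma n := Real.Gamma_pos_of_pos hnpos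
    simp [Real.rpow_zero, div_self hΓn.ne']
  · exact gammaRatio_tendsto_of_Ioo h hx1

open Real Topology in
lemma slope_rpow_tendsto {a : ℝ} (ha : 0 < a) :
    Tendsto (fun n : ℕ => (((n:ℝ) + 1) ^ a - (n:ℝ) ^ a) / (n:ℝ) ^ (a - 1)) atTop (𝓝 a) := by
  have hd : HasDerivAt (fun y : ℝ => y ^ a) (a * (1:ℝ) ^ (a - 1)) 1 :=
    Real.hasDerivAt_rpow_const (Or.inl one_ne_zero)
  rw [Real.one_rpow, mul_one] at hd
  have hslope := hasDerivAt_iff_tendsto_slope.1 hd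
  have hu : Tendsto (fun n : ℕ => 1 + 1 / (n:ℝ)) atTop (𝓝[≠] 1) := by
    rw [tendsto_nhdsWithin_iff]
    constructor
    · have h : Tendsto (fun n : ℕ => 1 + 1/(n:ℝ)) atTop (𝓝 (1 + 0)) :=
        Tendsto.add tendsto_const_nhds tendsto_one_div_atTop_nhds_zero_nat
      simpa using h
    · filter_upwards [eventually_ge_atTop 1] with n hn
      have hnpos : (0 : ℝ) < n := by exact_mod_cast hn
      have : 0 < 1 / (n:ℝ) := by positivity
      simp only [Set.mem_compl_iff, Set.mem_singleton_iff]
      intro hcon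
      nlinarith [hcon]
  have hcomp := hslope.comp hu
  refine hcomp.congr' ?_
  filter_upwards [eventually_ge_atTop 1] with n hn
  have hnpos : (0 : ℝ) < n := by exact_mod_cast hn
  have h1n : (0:ℝ) < 1 + 1/(n:ℝ) := by positivity
  simp only [Function.comp_apply, slope_def_field]
  have e1 : ((n:ℝ) + 1) ^ a = (n:ℝ) ^ a * (1 + 1/(n:ℝ)) ^ a := by
    rw [← Real.mul_rpow hnpos.le h1n.le]
    congr 1
    field_simp
  have e2 : (n:ℝ) ^ (a - 1) = (n:ℝ) ^ a / (n:ℝ) := by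
    rw [Real.rpow_sub hnpos, Real.rpow_one]
  rw [e1, e2]
  have hna : (0:ℝ) < (n:ℝ) ^ a := Real.rpow_pos_of_pos hnpos a
  field_simp
  rw [Real.one_rpow]
  ring

open Real Topology in
lemma sum_c_tendsto {p : ℝ} (hp0 : 0 < p) (hp3 : p < 3/4) :
    Tendsto (fun n : ℕ =>
        (∑ j ∈ Finset.range n, ((aERW p j)⁻¹) ^ 2) / (n : ℝ) ^ (3 - 4*p)) atTop
      (𝓝 (Real.Gamma (2*p) ^ 2 / (3 - 4*p))) := by
  set a : ℝ := 3 - 4*p with ha_def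
  set x : ℝ := 2*p - 1 with hx_def
  have ha : 0 < a := by rw [ha_def]; linarith
  have hΓp : 0 < Real.Gamma (2*p) := Real.Gamma_pos_of_pos (by linarith)
  set c : ℕ → ℝ := fun j => ((aERW p j)⁻¹) ^ 2 with hc_def
  set g : ℕ → ℝ := fun j => ((j:ℝ) + 1) ^ a - (j:ℝ) ^ a with hg_def
  set L : ℝ := Real.Gamma (2*p) ^ 2 / a with hL_def
  have hg_nonneg : (0 : ℕ → ℝ) ≤ g := by
    intro j
    simp only [hg_def, Pi.zero_apply, sub_nonneg]
    exact Real.rpow_le_rpow (Nat.cast_nonneg j) (by linarith) ha.le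
  have hg_pos : ∀ j : ℕ, 0 < g j := by
    intro j
    simp only [hg_def, sub_pos]
    exact Real.rpow_lt_rpow (Nat.cast_nonneg j) (lt_add_one _) ha
  have hsum_g : ∀ n : ℕ, ∑ j ∈ Finset.range n, g j = (n : ℝ) ^ a := by
    intro n
    have h1 := Finset.sum_range_sub (fun j : ℕ => ((j:ℝ)) ^ a) n
    rw [show (∑ j ∈ Finset.range n, g j) = ∑ j ∈ Finset.range n,
        ((((j+1 : ℕ)):ℝ) ^ a - ((j:ℕ):ℝ) ^ a) from by
      apply Finset.sum_congr rfl; intro j _; push_cast; rfl, h1]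
    rw [Nat.cast_zero, Real.zero_rpow ha.ne', sub_zero]
  have hsum_g_top : Tendsto (fun n : ℕ => ∑ j ∈ Finset.range n, g j) atTop atTop := by
    simp only [hsum_g]
    exact (tendsto_rpow_atTop ha).comp tendsto_natCast_atTop_atTop
  have hgq : Tendsto (fun n : ℕ => g n / (n:ℝ) ^ (a - 1)) atTop (𝓝 a) := slope_rpow_tendsto ha
  have hcq : Tendsto (fun n : ℕ => c n / (n:ℝ) ^ (a - 1)) atTop (𝓝 (Real.Gamma (2*p) ^ 2)) := by
    have hr := gammaRatio_tendsto (show -1 < x by rw [hx_def]; linarith)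
      (show x < 1 by rw [hx_def]; linarith)
    have hr' := ((hr.inv₀ one_ne_zero).pow 2).mul_const (Real.Gamma (2*p) ^ 2)
    rw [inv_one, one_pow, one_mul] at hr'
    refine hr'.congr' ?_
    filter_upwards [eventually_ge_atTop 2] with n hn
    have hnpos : (0 : ℝ) < n := by
      have : (2:ℝ) ≤ n := by exact_mod_cast hn
      linarith
    have hnx : (0 : ℝ) < (n : ℝ) + x := by
      have : (2:ℝ) ≤ n := by exact_mod_cast hn
      rw [hx_def]; linarith
    have hΓn : 0 < Real.Gamma n := Real.Gamma_pos_of_pos hnpos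
    have hΓnx : 0 < Real.Gamma ((n : ℝ) + x) := Real.Gamma_pos_of_pos hnx
    have hnxpow : 0 < (n:ℝ) ^ x := Real.rpow_pos_of_pos hnpos x
    have hpow : (n:ℝ) ^ (a - 1) = ((n:ℝ) ^ x * (n:ℝ) ^ x)⁻¹ := by
      rw [← Real.rpow_add hnpos, ← Real.rpow_neg hnpos.le]
      congr 1
      rw [ha_def, hx_def]; ring
    simp only [hc_def, aERW, if_neg (by omega : ¬ n ≤ 1), ← hx_def, hpow]
    field_simp
  have hLg : Tendsto (fun n : ℕ => c n / g n) atTop (𝓝 L) := by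
    have h := hcq.div hgq ha.ne'
    rw [← hL_def] at h
    refine h.congr' ?_
    filter_upwards [eventually_ge_atTop 1] with n hn
    have hnpos : (0 : ℝ) < n := by exact_mod_cast hn
    have he : (n:ℝ) ^ (a - 1) ≠ 0 := (Real.rpow_pos_of_pos hnpos _).ne'
    simp only [Pi.div_apply]
    rw [div_div_div_comm, div_self he, div_one]
  have hf : (fun n : ℕ => c n - L * g n) =o[atTop] g := by
    rw [Asymptotics.isLittleO_iff_tendsto' (by
      filter_upwards with n h
      exact absurd h (hg_pos n).ne')]
    have h := hLg.sub_const L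
    rw [sub_self] at h
    refine h.congr ?_
    intro n
    rw [sub_div, mul_div_assoc, div_self (hg_pos n).ne', mul_one]
  have hsum := (hf.sum_range hg_nonneg hsum_g_top).tendsto_div_nhds_zero
  have key : Tendsto (fun n : ℕ =>
      (∑ j ∈ Finset.range n, c j) / (n:ℝ) ^ a - L) atTop (𝓝 0) := by
    refine hsum.congr' ?_
    filter_upwards [eventually_ge_atTop 1] with n hn
    have hnpos : (0 : ℝ) < n := by exact_mod_cast hn
    have hna : ((n:ℝ) ^ a) ≠ 0 := (Real.rpow_pos_of_pos hnpos _).ne'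
    rw [Finset.sum_sub_distrib, ← Finset.mul_sum, hsum_g, sub_div, mul_div_assoc,
      div_self hna, mul_one]
  have := key.add (tendsto_const_nhds (x := L) (f := atTop (α := ℕ)))
  rw [zero_add] at this
  refine this.congr fun n => by ring


/-- `s_n^2 ~ Γ(2p)^2 n^{3-4p}/(3-4p)` for `p < 3/4`. -/
theorem sSqERW_asymptotic_diffusive {p q : ℝ} (hp : p ∈ Set.Ioo (0 : ℝ) (3 / 4))
    (hq : q ∈ Set.Ioo (0 : ℝ) 1) :
    Tendsto (fun n : ℕ =>
        sSqERW p q n / (Real.Gamma (2 * p) ^ 2 * (n : ℝ) ^ (3 - 4 * p) / (3 - 4 * p)))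
      atTop (nhds 1) := by
  obtain ⟨hp0, hp3⟩ := hp
  have ha : (0:ℝ) < 3 - 4 * p := by linarith
  have hΓp : 0 < Real.Gamma (2 * p) := Real.Gamma_pos_of_pos (by linarith)
  set a : ℝ := 3 - 4 * p with ha_def
  set c : ℕ → ℝ := fun j => ((aERW p j)⁻¹) ^ 2 with hc_def
  set S : ℕ → ℝ := fun n => ∑ j ∈ Finset.range n, c j with hS_def
  set D : ℕ → ℝ := fun n => Real.Gamma (2 * p) ^ 2 * (n : ℝ) ^ a / a with hD_def
  set L : ℝ := Real.Gamma (2 * p) ^ 2 / a with hL_def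
  have hS := sum_c_tendsto hp0 hp3
  -- step 1 : S (n+1) / (n+1)^a → L
  have hSfrac : Tendsto (fun n : ℕ => S (n + 1) / ((n:ℝ) + 1) ^ a) atTop (𝓝 L) := by
    have := hS.comp (tendsto_add_atTop_nat 1)
    refine this.congr fun n => ?_
    simp only [Function.comp_apply, hS_def]
    push_cast
    rfl
  -- step 2 : (n+1)^a / n^a → 1
  have hratio : Tendsto (fun n : ℕ => ((n:ℝ) + 1) ^ a / (n:ℝ) ^ a) atTop (𝓝 1) := by
    have h1 : Tendsto (fun n : ℕ => ((n:ℝ) + 1) / (n:ℝ)) atTop (𝓝 1) := by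
      have h := (tendsto_const_nhds (x := (1:ℝ)) (f := atTop (α := ℕ))).add
        tendsto_one_div_atTop_nhds_zero_nat
      rw [add_zero] at h
      refine h.congr' ?_
      filter_upwards [eventually_ge_atTop 1] with n hn
      have hnpos : (0 : ℝ) < n := by exact_mod_cast hn
      field_simp
    have h2 : ContinuousAt (fun y : ℝ => y ^ a) 1 :=
      Real.continuousAt_rpow_const 1 a (Or.inl one_ne_zero)
    have h3 := h2.tendsto.comp h1
    rw [Real.one_rpow] at h3
    refine h3.congr' ?_
    filter_upwards [eventually_ge_atTop 1] with n hn
    have hnpos : (0 : ℝ) < n := by exact_mod_cast hn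
    simp only [Function.comp_apply]
    rw [Real.div_rpow (by positivity) hnpos.le]
  -- step 3 : S(n+1) / D n → 1
  have hmain : Tendsto (fun n : ℕ => S (n + 1) / D n) atTop (𝓝 1) := by
    have h := (hSfrac.mul hratio).mul_const (a / Real.Gamma (2 * p) ^ 2)
    have hval : L * 1 * (a / Real.Gamma (2 * p) ^ 2) = 1 := by
      rw [hL_def]; field_simp
    rw [hval] at h
    refine h.congr' ?_
    filter_upwards [eventually_ge_atTop 1] with n hn
    have hnpos : (0 : ℝ) < n := by exact_mod_cast hn
    have h1 : ((n:ℝ) + 1) ^ a ≠ 0 := by positivity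
    have h2 : ((n:ℝ)) ^ a ≠ 0 := (Real.rpow_pos_of_pos hnpos a).ne'
    have hden : (0:ℝ) < Real.Gamma (2 * p) ^ 2 * (n:ℝ) ^ a / a := by positivity
    have hnum : (0:ℝ) < ((n:ℝ) + 1) ^ a * (n:ℝ) ^ a * Real.Gamma (2 * p) ^ 2 := by positivity
    rw [hD_def, div_mul_div_comm, div_mul_div_comm,
      div_eq_div_iff hnum.ne' hden.ne']
    field_simp
  -- step 4 : constant / D n → 0
  have hDtop : Tendsto D atTop atTop := by
    have h := (tendsto_rpow_atTop ha).comp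
      (tendsto_natCast_atTop_atTop (R := ℝ))
    have h2 := h.const_mul_atTop (show 0 < Real.Gamma (2 * p) ^ 2 / a by positivity)
    refine h2.congr fun n => ?_
    simp only [Function.comp_apply, hD_def]
    ring
  have hconst : Tendsto (fun n : ℕ => (q * (1 - q) - 2) / D n) atTop (𝓝 0) :=
    tendsto_const_nhds.div_atTop hDtop
  -- assemble
  have hfinal := hconst.add hmain
  rw [zero_add] at hfinal
  refine hfinal.congr' ?_
  filter_upwards [eventually_ge_atTop 1] with n hn
  have hsum_split : S (n + 1) = 2 + ∑ j ∈ Finset.Icc 2 n, c j := by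
    show ∑ j ∈ Finset.range (n + 1), c j = 2 + ∑ j ∈ Finset.Icc 2 n, c j
    have h0 : Finset.range (n + 1) = Finset.Ico 0 (n + 1) := by
      rw [Finset.range_eq_Ico]
    rw [h0, ← Finset.sum_Ico_consecutive _ (Nat.zero_le 2) (by omega : 2 ≤ n + 1),
      Finset.Ico_add_one_right_eq_Icc]
    congr 1
    show ∑ j ∈ Finset.Ico 0 2, c j = 2
    rw [← Finset.range_eq_Ico]
    rw [Finset.sum_range_succ, Finset.sum_range_succ, Finset.sum_range_zero]
    simp [hc_def, aERW]
    norm_num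
  rw [← add_div]
  congr 1
  rw [hsum_split]
  simp only [sSqERW]
  ring
end

section
/- Let s_n^2 = q(1-q) + Σ_{j=2}^n 1/a_j^2 with a_j = Γ(j + 2p - 1)/(Γ(j) Γ(2p)) and p = 3/4. Then s_n^2 ~ Γ(3/2)^2 log n as n → ∞. -/
open MeasureTheory ProbabilityTheory Filter

lemma sq_Gamma_add_half_le {x : ℝ} (hx : 0 < x) :
    Real.Gamma (x + 1/2) ^ 2 ≤ Real.Gamma x * Real.Gamma (x + 1) := by
  have h := Real.convexOn_log_Gamma.2 (Set.mem_Ioi.2 hx)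
    (Set.mem_Ioi.2 (show (0:ℝ) < x + 1 by linarith))
    (by norm_num : (0:ℝ) ≤ 1/2) (by norm_num : (0:ℝ) ≤ 1/2) (by norm_num)
  simp only [smul_eq_mul, Function.comp_apply] at h
  have hx2 : (1/2:ℝ) * x + 1/2 * (x+1) = x + 1/2 := by ring
  rw [hx2] at h
  have g1 := Real.Gamma_pos_of_pos hx
  have g2 := Real.Gamma_pos_of_pos (show (0:ℝ) < x + 1 by linarith)
  have g3 := Real.Gamma_pos_of_pos (show (0:ℝ) < x + 1/2 by linarith)
  have h2 := Real.exp_le_exp.2 (show 2 * Real.log (Real.Gamma (x+1/2)) ≤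
      Real.log (Real.Gamma x) + Real.log (Real.Gamma (x+1)) by linarith)
  rw [Real.exp_add, Real.exp_log g1, Real.exp_log g2, two_mul, Real.exp_add,
    Real.exp_log g3, ← sq] at h2
  exact h2


lemma aERW_bound {j : ℕ} (hj : 2 ≤ j) :
    Real.Gamma (3/2) ^ 2 / (j : ℝ) ≤ ((aERW (3/4) j)⁻¹) ^ 2 ∧
    ((aERW (3/4) j)⁻¹) ^ 2 ≤ Real.Gamma (3/2) ^ 2 / ((j : ℝ) - 1) := by
  have hx : (2:ℝ) ≤ (j:ℝ) := by exact_mod_cast hj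
  set x : ℝ := (j : ℝ) with hxdef
  have hx0 : 0 < x := by linarith
  have g1 := Real.Gamma_pos_of_pos hx0
  have g3 := Real.Gamma_pos_of_pos (show (0:ℝ) < x + 1/2 by linarith)
  have gC := Real.Gamma_pos_of_pos (show (0:ℝ) < 3/2 by norm_num)
  have ha : aERW (3/4) j = Real.Gamma (x + 1/2) / (Real.Gamma x * Real.Gamma (3/2)) := by
    rw [aERW]
    rw [if_neg (by omega)]
    norm_num
    rfl
  have hav : ((aERW (3/4) j)⁻¹) ^ 2
      = Real.Gamma x ^ 2 * Real.Gamma (3/2) ^ 2 / Real.Gamma (x + 1/2) ^ 2 := by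
    rw [ha]; field_simp
  -- lemma A : Γ(x+1/2)^2 ≤ x * Γ x ^ 2
  have hA : Real.Gamma (x + 1/2) ^ 2 ≤ x * Real.Gamma x ^ 2 := by
    have := sq_Gamma_add_half_le hx0
    rwa [Real.Gamma_add_one hx0.ne', ← mul_assoc, mul_comm (Real.Gamma x) x, mul_assoc, ← sq] at this
  -- lemma B : x^2 * Γ x ^ 2 ≤ (x + 1/2) * Γ(x+1/2)^2
  have hB : x ^ 2 * Real.Gamma x ^ 2 ≤ (x + 1/2) * Real.Gamma (x + 1/2) ^ 2 := by
    have h := sq_Gamma_add_half_le (show (0:ℝ) < x + 1/2 by linarith)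
    have e1 : x + 1/2 + 1/2 = x + 1 := by ring
    have e2 : Real.Gamma (x + 1/2 + 1) = (x + 1/2) * Real.Gamma (x + 1/2) :=
      Real.Gamma_add_one (by linarith)
    rw [e1, e2, Real.Gamma_add_one hx0.ne'] at h
    nlinarith [sq_nonneg (Real.Gamma x)]
  constructor
  · rw [hav, div_le_div_iff₀ hx0 (by positivity)]
    nlinarith [sq_nonneg (Real.Gamma (3/2))]
  · rw [hav, div_le_div_iff₀ (by positivity) (by linarith)]
    nlinarith [sq_nonneg (Real.Gamma (3/2)), sq_nonneg (Real.Gamma (x+1/2)), mul_pos g3 g3]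

noncomputable def Hsum (n : ℕ) : ℝ := ∑ j ∈ Finset.Icc 1 n, ((j : ℝ))⁻¹

lemma Hsum_succ (n : ℕ) : Hsum (n + 1) = Hsum n + ((n:ℝ) + 1)⁻¹ := by
  rw [Hsum, Finset.sum_Icc_succ_top (by omega), ← Hsum]
  push_cast
  ring

lemma Hsum_eq (n : ℕ) : Hsum n = (harmonic n : ℝ) := by
  induction n with
  | zero => simp [Hsum]
  | succ m ih =>
    rw [Hsum_succ, ih, harmonic_succ]
    push_cast
    ring

lemma Hsum_split {n : ℕ} (hn : 1 ≤ n) :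
    ∑ j ∈ Finset.Icc 2 n, ((j : ℝ))⁻¹ = Hsum n - 1 := by
  have h : Finset.Icc 1 n = insert 1 (Finset.Icc 2 n) := by
    ext j; simp only [Finset.mem_Icc, Finset.mem_insert]; omega
  rw [Hsum, h, Finset.sum_insert (by simp)]
  simp

lemma sum_shift (n : ℕ) :
    ∑ j ∈ Finset.Icc 2 (n + 1), (((j : ℝ)) - 1)⁻¹ = Hsum n := by
  induction n with
  | zero => simp [Hsum]
  | succ m ih =>
    rw [Finset.sum_Icc_succ_top (by omega), ih, Hsum_succ]
    push_cast
    ring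

lemma Hsum_mono : Monotone Hsum := by
  intro a b hab
  exact Finset.sum_le_sum_of_subset_of_nonneg (Finset.Icc_subset_Icc_right hab)
    (fun i _ _ => by positivity)

lemma tendsto_Hsum_div_log :
    Tendsto (fun n : ℕ => Hsum n / Real.log n) atTop (nhds 1) := by
  have hlog : Tendsto (fun n : ℕ => (Real.log n)⁻¹) atTop (nhds 0) :=
    (Real.tendsto_log_atTop.comp tendsto_natCast_atTop_atTop).inv_tendsto_atTop
  have h1 : Tendsto (fun n : ℕ => Real.eulerMascheroniSeq' n * (Real.log n)⁻¹ + 1)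
      atTop (nhds 1) := by
    have := Real.tendsto_eulerMascheroniSeq'.mul hlog
    rw [mul_zero] at this
    simpa using this.add_const 1
  refine h1.congr' ?_
  filter_upwards [eventually_ge_atTop 2] with n hn
  have hn0 : (n:ℝ) ≠ 0 := by positivity
  have hlogn : Real.log n ≠ 0 := by
    have : (1:ℝ) < n := by exact_mod_cast (by omega : 1 < n)
    exact (Real.log_pos this).ne'
  rw [Real.eulerMascheroniSeq', if_neg (by omega), Hsum_eq]
  field_simp
  ring

/-- `s_n^2 ~ Γ(3/2)^2 log n` at the critical value `p = 3/4`. -/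
theorem sSqERW_asymptotic_critical {q : ℝ} (hq : q ∈ Set.Ioo (0 : ℝ) 1) :
    Tendsto (fun n : ℕ =>
        sSqERW (3 / 4) q n / (Real.Gamma (3 / 2) ^ 2 * Real.log n))
      atTop (nhds 1) := by
  have hC : 0 < Real.Gamma (3/2) := Real.Gamma_pos_of_pos (by norm_num)
  have hG : 0 < Real.Gamma (3/2) ^ 2 := by positivity
  have hlog : Tendsto (fun n : ℕ => (Real.log n)⁻¹) atTop (nhds 0) :=
    (Real.tendsto_log_atTop.comp tendsto_natCast_atTop_atTop).inv_tendsto_atTop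
  have hH := tendsto_Hsum_div_log
  have hlow : Tendsto (fun n : ℕ =>
      (q * (1 - q) / Real.Gamma (3/2) ^ 2 - 1) * (Real.log n)⁻¹ + Hsum n / Real.log n)
      atTop (nhds 1) := by
    have := ((hlog.const_mul (q * (1 - q) / Real.Gamma (3/2) ^ 2 - 1)).add hH)
    simpa using this
  have hup : Tendsto (fun n : ℕ =>
      (q * (1 - q) / Real.Gamma (3/2) ^ 2) * (Real.log n)⁻¹ + Hsum n / Real.log n)
      atTop (nhds 1) := by
    have := ((hlog.const_mul (q * (1 - q) / Real.Gamma (3/2) ^ 2)).add hH)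
    simpa using this
  refine tendsto_of_tendsto_of_tendsto_of_le_of_le' hlow hup ?_ ?_
  all_goals filter_upwards [eventually_ge_atTop 2] with n hn
  all_goals
    have hLn : 0 < Real.log n := Real.log_pos (by exact_mod_cast (by omega : 1 < n))
    have hS1 : Real.Gamma (3/2) ^ 2 * (Hsum n - 1)
        ≤ ∑ j ∈ Finset.Icc 2 n, ((aERW (3/4) j)⁻¹) ^ 2 := by
      rw [← Hsum_split (by omega : 1 ≤ n), Finset.mul_sum]
      refine Finset.sum_le_sum fun j hj => ?_
      have h2j : 2 ≤ j := (Finset.mem_Icc.1 hj).1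
      have := (aERW_bound h2j).1
      rw [div_eq_mul_inv] at this
      exact this
    have hS2 : ∑ j ∈ Finset.Icc 2 n, ((aERW (3/4) j)⁻¹) ^ 2
        ≤ Real.Gamma (3/2) ^ 2 * Hsum n := by
      have hshift : ∑ j ∈ Finset.Icc 2 n, (((j : ℝ)) - 1)⁻¹ = Hsum (n - 1) := by
        have := sum_shift (n - 1)
        rwa [Nat.sub_add_cancel (by omega : 1 ≤ n)] at this
      calc ∑ j ∈ Finset.Icc 2 n, ((aERW (3/4) j)⁻¹) ^ 2
          ≤ ∑ j ∈ Finset.Icc 2 n, Real.Gamma (3/2) ^ 2 * (((j : ℝ)) - 1)⁻¹ := by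
            refine Finset.sum_le_sum fun j hj => ?_
            have h2j : 2 ≤ j := (Finset.mem_Icc.1 hj).1
            have := (aERW_bound h2j).2
            rwa [div_eq_mul_inv] at this
        _ = Real.Gamma (3/2) ^ 2 * Hsum (n - 1) := by rw [← Finset.mul_sum, hshift]
        _ ≤ Real.Gamma (3/2) ^ 2 * Hsum n := by
            exact mul_le_mul_of_nonneg_left (Hsum_mono (by omega)) hG.le
  · -- lower bound
    have heq : (q * (1 - q) / Real.Gamma (3/2) ^ 2 - 1) * (Real.log n)⁻¹ + Hsum n / Real.log n
        = (q * (1 - q) + Real.Gamma (3/2) ^ 2 * (Hsum n - 1))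
          / (Real.Gamma (3/2) ^ 2 * Real.log n) := by
      field_simp
      ring
    rw [heq, sSqERW]
    exact div_le_div_of_nonneg_right (by linarith) (by positivity)
  · -- upper bound
    have heq : (q * (1 - q) / Real.Gamma (3/2) ^ 2) * (Real.log n)⁻¹ + Hsum n / Real.log n
        = (q * (1 - q) + Real.Gamma (3/2) ^ 2 * Hsum n)
          / (Real.Gamma (3/2) ^ 2 * Real.log n) := by
      field_simp
    rw [heq, sSqERW]
    exact div_le_div_of_nonneg_right (by linarith) (by positivity)
end

section
/- With a_n, s_n as above and p < 3/4, a_n s_n ~ sqrt(n/(3-4p)) as n → ∞; and for p = 3/4, a_n s_n ~ sqrt(n log n). -/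
open MeasureTheory ProbabilityTheory Filter

section ERWAsymptotics
open Filter Asymptotics Finset Topology

lemma stolzCesaro {u v : ℕ → ℝ} {L : ℝ} (hv : Tendsto v atTop atTop)
    (hmono : ∀ᶠ n in atTop, v n < v (n + 1))
    (h : Tendsto (fun n => (u (n + 1) - u n) / (v (n + 1) - v n)) atTop (𝓝 L)) :
    Tendsto (fun n => u n / v n) atTop (𝓝 L) := by
  obtain ⟨N, hN⟩ := eventually_atTop.1 hmono
  set U : ℕ → ℝ := fun m => u (m + N) with hU
  set V : ℕ → ℝ := fun m => v (m + N) with hV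
  have hg : ∀ m, 0 < V (m + 1) - V m := by
    intro m
    have := hN (m + N) (Nat.le_add_left _ _)
    simp only [hV]
    have : v (m + N) < v (m + N + 1) := this
    have e : m + 1 + N = m + N + 1 := by omega
    rw [e]; linarith
  set g : ℕ → ℝ := fun m => V (m + 1) - V m with hgdef
  set f : ℕ → ℝ := fun m => U (m + 1) - U m - L * g m with hfdef
  have hVtop : Tendsto V atTop atTop := (tendsto_add_atTop_iff_nat N).2 hv
  have hsumg : ∀ n, ∑ i ∈ range n, g i = V n - V 0 := fun n => Finset.sum_range_sub V n
  have hsumgtop : Tendsto (fun n => ∑ i ∈ range n, g i) atTop atTop := by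
    simp only [hsumg]
    exact hVtop.atTop_add tendsto_const_nhds
  have hfg : f =o[atTop] g := by
    rw [isLittleO_iff_tendsto (fun m hm => absurd hm (hg m).ne')]
    have : Tendsto (fun m => (U (m + 1) - U m) / (V (m + 1) - V m)) atTop (𝓝 L) := by
      have := (tendsto_add_atTop_iff_nat N).2 h
      refine this.congr fun m => ?_
      simp only [hU, hV]
      congr 2 <;> · congr 1 <;> omega
    have h2 : Tendsto (fun m => (U (m + 1) - U m) / (V (m + 1) - V m) - L) atTop (𝓝 (L - L)) :=
      this.sub_const L
    rw [sub_self] at h2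
    refine h2.congr fun m => ?_
    show _ = (U (m + 1) - U m - L * (V (m + 1) - V m)) / (V (m + 1) - V m)
    rw [eq_div_iff (hg m).ne', sub_mul, div_mul_cancel₀ _ (hg m).ne']
  have hsums := (hfg.sum_range (fun m => (hg m).le) hsumgtop).tendsto_div_nhds_zero
  have hsumf : ∀ n, ∑ i ∈ range n, f i = (U n - U 0) - L * (V n - V 0) := by
    intro n
    rw [hfdef]
    rw [Finset.sum_sub_distrib, ← Finset.mul_sum, Finset.sum_range_sub U n, hsumg n]
  simp only [hsumf, hsumg] at hsums
  have hVevent : ∀ᶠ n in atTop, V 0 < V n ∧ 0 < V n :=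
    (hVtop.eventually_gt_atTop (V 0)).and (hVtop.eventually_gt_atTop 0)
  have key : Tendsto (fun n => U n / V n) atTop (𝓝 L) := by
    have h1 : Tendsto (fun n => (U n - U 0) / (V n - V 0)) atTop (𝓝 L) := by
      have := hsums.add_const L
      rw [zero_add] at this
      refine this.congr' ?_
      filter_upwards [hVevent] with n hn
      have hne : V n - V 0 ≠ 0 := by linarith [hn.1]
      field_simp
      ring
    have h2 : Tendsto (fun n => (V n - V 0) / V n) atTop (𝓝 1) := by
      have : Tendsto (fun n => 1 - V 0 / V n) atTop (𝓝 (1 - 0)) :=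
        tendsto_const_nhds.sub (tendsto_const_nhds.div_atTop hVtop)
      rw [sub_zero] at this
      refine this.congr' ?_
      filter_upwards [hVevent] with n hn
      have hne0 : V n ≠ 0 := hn.2.ne'
      rw [sub_div, div_self hne0]
    have h3 : Tendsto (fun n => U 0 / V n) atTop (𝓝 0) := tendsto_const_nhds.div_atTop hVtop
    have := (h1.mul h2).add h3
    rw [mul_one, add_zero] at this
    refine this.congr' ?_
    filter_upwards [hVevent] with n hn
    have hne : V n - V 0 ≠ 0 := by linarith [hn.1]
    have hne0 : V n ≠ 0 := hn.2.ne'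
    field_simp
    ring
  exact (tendsto_add_atTop_iff_nat N).1 key

lemma aERW_eq {p : ℝ} (hp : 0 < p) {n : ℕ} (hn : 1 ≤ n) :
    aERW p n = Real.Gamma ((n : ℝ) + (2 * p - 1)) / (Real.Gamma n * Real.Gamma (2 * p)) := by
  rcases eq_or_lt_of_le hn with h | h
  · simp only [aERW, ← h, Nat.cast_one, le_refl, if_true]
    rw [show (1 : ℝ) + (2 * p - 1) = 2 * p by ring, Real.Gamma_one]
    field_simp [(Real.Gamma_pos_of_pos (by linarith : (0:ℝ) < 2 * p)).ne']
  · rw [aERW, if_neg (by omega)]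

lemma aERW_pos {p : ℝ} (hp : 0 < p) (n : ℕ) : 0 < aERW p n := by
  by_cases h : n ≤ 1
  · simp [aERW, h]
  · rw [aERW, if_neg h]
    have h2 : (2:ℝ) ≤ (n:ℝ) := by exact_mod_cast Nat.not_lt.1 (fun hh => h (by omega))
    apply div_pos (Real.Gamma_pos_of_pos (by linarith)) (mul_pos
      (Real.Gamma_pos_of_pos (by linarith)) (Real.Gamma_pos_of_pos (by linarith)))

lemma aERW_succ {p : ℝ} (hp : 0 < p) {n : ℕ} (hn : 1 ≤ n) :
    aERW p (n + 1) = aERW p n * (((n : ℝ) + (2 * p - 1)) / n) := by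
  have hn0 : (0:ℝ) < (n:ℝ) := by exact_mod_cast hn
  have hn1 : (1:ℝ) ≤ (n:ℝ) := by exact_mod_cast hn
  have hnc : (0:ℝ) < (n:ℝ) + (2 * p - 1) := by linarith
  have hG1 : Real.Gamma ((n:ℝ) + (2 * p - 1) + 1) = ((n:ℝ) + (2 * p - 1)) *
      Real.Gamma ((n:ℝ) + (2 * p - 1)) := Real.Gamma_add_one hnc.ne'
  have hG2 : Real.Gamma ((n:ℝ) + 1) = (n:ℝ) * Real.Gamma (n:ℝ) := Real.Gamma_add_one hn0.ne'
  rw [aERW_eq hp (by omega), aERW_eq hp hn]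
  push_cast
  rw [show (n:ℝ) + 1 + (2 * p - 1) = (n:ℝ) + (2 * p - 1) + 1 by ring, hG1, hG2]
  have hGn : Real.Gamma (n:ℝ) ≠ 0 := (Real.Gamma_pos_of_pos hn0).ne'
  have hGp : Real.Gamma (2 * p) ≠ 0 := (Real.Gamma_pos_of_pos (by linarith)).ne'
  field_simp

lemma u_pos (hq0 : 0 < q) (hq1 : q < 1) (n : ℕ) : 0 < sSqERW p q n := by
  have : (0:ℝ) < q * (1 - q) := mul_pos hq0 (by linarith)
  have h2 : (0:ℝ) ≤ ∑ j ∈ Finset.Icc 2 n, ((aERW p j)⁻¹) ^ 2 :=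
    Finset.sum_nonneg fun j _ => sq_nonneg _
  unfold sSqERW; linarith

lemma v_succ (hp0 : 0 < p) {n : ℕ} (hn : 1 ≤ n) :
    ((n:ℝ) + 1) / (aERW p (n+1))^2 =
      ((n:ℝ) / (aERW p n)^2) * (((n:ℝ) * ((n:ℝ)+1)) / (((n:ℝ) + (2*p-1))^2)) := by
  have hn1 : (1:ℝ) ≤ (n:ℝ) := by exact_mod_cast hn
  have hnc : (0:ℝ) < (n:ℝ) + (2 * p - 1) := by linarith
  have ha : aERW p n ≠ 0 := (aERW_pos hp0 n).ne'
  rw [aERW_succ hp0 hn]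
  field_simp

lemma u_succ (hp0 : 0 < p) {n : ℕ} (hn : 1 ≤ n) :
    sSqERW p q (n+1) = sSqERW p q n + (((n:ℝ) + 1) / (aERW p (n+1))^2) / ((n:ℝ) + 1) := by
  have ha : aERW p (n+1) ≠ 0 := (aERW_pos hp0 (n+1)).ne'
  have hn1 : (0:ℝ) < (n:ℝ) + 1 := by positivity
  unfold sSqERW
  rw [Finset.sum_Icc_succ_top (by omega : 2 ≤ n + 1)]
  push_cast
  rw [div_div, mul_comm ((aERW p (n+1))^2), ← div_div, div_self hn1.ne']
  rw [inv_pow, one_div]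
  ring


lemma case_lt {p q : ℝ} (hp0 : 0 < p) (hplt : p < 3/4) (hq0 : 0 < q) (hq1 : q < 1) :
    Tendsto (fun n : ℕ =>
        aERW p n * Real.sqrt (sSqERW p q n) / Real.sqrt ((n : ℝ) / (3 - 4 * p)))
      atTop (nhds 1) := by
  set c : ℝ := 2 * p - 1 with hcdef
  set d : ℝ := 3 - 4 * p with hddef
  have hd : 0 < d := by rw [hddef]; linarith
  have hc1 : -1 < c := by rw [hcdef]; linarith
  set a : ℕ → ℝ := aERW p with hadef
  set u : ℕ → ℝ := sSqERW p q with hudef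
  set v : ℕ → ℝ := fun n => (n:ℝ) / (a n)^2 with hvdef
  clear_value c d
  have ha : ∀ n, 0 < a n := aERW_pos hp0
  have hvpos : ∀ n : ℕ, 1 ≤ n → 0 < v n := by
    intro n hn
    have : (0:ℝ) < (n:ℝ) := by exact_mod_cast hn
    exact div_pos this (pow_pos (ha n) 2)
  have hvrec : ∀ n : ℕ, 1 ≤ n →
      v (n+1) = v n * (((n:ℝ) * ((n:ℝ)+1)) / (((n:ℝ) + c)^2)) := by
    intro n hn
    have := v_succ hp0 (n := n) hn
    simp only [hvdef, hadef, hcdef]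
    push_cast
    exact this
  -- increment formula
  have hΔv : ∀ n : ℕ, 1 ≤ n →
      v (n+1) - v n = v n * (((n:ℝ) * d - c^2) / (((n:ℝ) + c)^2)) := by
    intro n hn
    have hn1 : (1:ℝ) ≤ (n:ℝ) := by exact_mod_cast hn
    have hnc : (0:ℝ) < (n:ℝ) + c := by rw [hcdef]; linarith
    have hnc' : ((n:ℝ) + c) ≠ 0 := hnc.ne'
    rw [hvrec n hn]
    field_simp
    rw [hcdef, hddef]
    ring
  -- threshold
  obtain ⟨N, hN1, hN2⟩ : ∃ N : ℕ, 1 ≤ N ∧ 2 * c^2 / d ≤ (N:ℝ) := by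
    obtain ⟨M, hM⟩ := exists_nat_ge (2 * c^2 / d)
    exact ⟨max 1 M, le_max_left _ _, hM.trans (by exact_mod_cast le_max_right 1 M)⟩
  have hkey : ∀ n : ℕ, N ≤ n → (n:ℝ) * d / 2 ≤ (n:ℝ) * d - c^2 := by
    intro n hn
    have h1 : (N:ℝ) ≤ (n:ℝ) := by exact_mod_cast hn
    have h2 : 2 * c^2 ≤ (n:ℝ) * d := by
      rw [div_le_iff₀ hd] at hN2
      nlinarith [mul_le_mul_of_nonneg_right h1 hd.le]
    linarith
  have hnd : ∀ n : ℕ, N ≤ n → 0 < (n:ℝ) * d - c^2 := by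
    intro n hn
    have h1 : (1:ℝ) ≤ (n:ℝ) := by exact_mod_cast hN1.trans hn
    have := hkey n hn
    nlinarith
  have hmono : ∀ n : ℕ, N ≤ n → v n < v (n+1) := by
    intro n hn
    have hn1 : 1 ≤ n := hN1.trans hn
    have hn1' : (1:ℝ) ≤ (n:ℝ) := by exact_mod_cast hn1
    have hnc : (0:ℝ) < (n:ℝ) + c := by rw [hcdef]; linarith
    have := hΔv n hn1
    nlinarith [hvpos n hn1, hnd n hn, mul_pos (hvpos n hn1) (div_pos (hnd n hn) (pow_pos hnc 2))]
  have hge : ∀ n : ℕ, N ≤ n → v N ≤ v n := by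
    intro n hn
    induction n, hn using Nat.le_induction with
    | base => exact le_rfl
    | succ n hn ih => exact ih.trans (hmono n hn).le
  -- lower bound on increments
  have hlow : ∀ n : ℕ, N ≤ n → v N * (d/8) * (1/(n:ℝ)) ≤ v (n+1) - v n := by
    intro n hn
    have hn1 : 1 ≤ n := hN1.trans hn
    have hn1' : (1:ℝ) ≤ (n:ℝ) := by exact_mod_cast hn1
    have hn0 : (0:ℝ) < (n:ℝ) := by linarith
    have hc2 : c < 1 := by rw [hcdef]; linarith
    have hnc : (0:ℝ) < (n:ℝ) + c := by linarith
    rw [hΔv n hn1]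
    have hsq : ((n:ℝ) + c)^2 ≤ 4 * (n:ℝ)^2 := by nlinarith
    have h1 : d / (8 * (n:ℝ)) ≤ ((n:ℝ) * d - c^2) / (((n:ℝ) + c)^2) := by
      rw [div_le_div_iff₀ (by positivity) (pow_pos hnc 2)]
      nlinarith [mul_le_mul_of_nonneg_right hsq hd.le,
        mul_le_mul_of_nonneg_right (hkey n hn) (by positivity : (0:ℝ) ≤ 8 * (n:ℝ))]
    calc v N * (d/8) * (1/(n:ℝ)) = v N * (d / (8 * (n:ℝ))) := by
          field_simp
    _ ≤ v n * (((n:ℝ) * d - c^2) / (((n:ℝ) + c)^2)) :=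
          mul_le_mul (hge n hn) h1 (div_nonneg hd.le (by positivity)) (hvpos n hn1).le
  -- v tends to infinity
  have hvN : 0 < v N := hvpos N hN1
  have hKpos : 0 < v N * (d/8) := mul_pos hvN (by positivity)
  have hSsum : Tendsto (fun n => ∑ i ∈ range n, (1:ℝ)/((i:ℝ) + N)) atTop atTop := by
    have hns : ¬ Summable (fun i : ℕ => (1:ℝ)/((i:ℝ) + N)) := by
      intro hs
      have hs2 : Summable (fun i : ℕ => (1:ℝ)/(((i + N : ℕ)):ℝ)) := by
        refine hs.congr fun i => ?_
        push_cast; ring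
      exact Real.not_summable_one_div_natCast
        ((summable_nat_add_iff (f := fun n : ℕ => 1/(n:ℝ)) N).mp hs2)
    exact (not_summable_iff_tendsto_nat_atTop_of_nonneg
      (fun i => by positivity)).mp hns
  have hshift : ∀ n : ℕ,
      v N + (v N * (d/8)) * (∑ i ∈ range n, (1:ℝ)/((i:ℝ)+N)) ≤ v (n + N) := by
    intro n
    induction n with
    | zero => simp
    | succ n ih =>
      have hlow' := hlow (n + N) (Nat.le_add_left _ _)
      have hcast : (((n + N : ℕ)):ℝ) = (n:ℝ) + N := by push_cast; ring
      rw [hcast] at hlow'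
      have e : n + 1 + N = (n + N) + 1 := by omega
      rw [e, Finset.sum_range_succ, mul_add]
      have h3 : (v N * (d/8)) * (1/((n:ℝ) + N)) ≤ v ((n+N)+1) - v (n+N) := by
        calc (v N * (d/8)) * (1/((n:ℝ) + N)) = v N * (d/8) * (1/((n:ℝ)+N)) := by ring
        _ ≤ _ := hlow'
      linarith
  have hvtop : Tendsto v atTop atTop := by
    rw [← tendsto_add_atTop_iff_nat N]
    exact tendsto_atTop_mono hshift
      (tendsto_atTop_add_const_left _ (v N) (hSsum.const_mul_atTop hKpos))
  -- ratio of increments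
  have hratio : Tendsto (fun n : ℕ => (u (n+1) - u n) / (v (n+1) - v n)) atTop (𝓝 (1/d)) := by
    have h0 : Tendsto (fun n : ℕ => c^2 * (1/(n:ℝ))) atTop (𝓝 0) := by
      have := tendsto_one_div_atTop_nhds_zero_nat.const_mul (c^2)
      rwa [mul_zero] at this
    have hden : Tendsto (fun n : ℕ => d - c^2*(1/(n:ℝ))) atTop (𝓝 d) := by
      have := (tendsto_const_nhds : Tendsto (fun _ : ℕ => d) atTop (𝓝 d)).sub h0
      rwa [sub_zero] at this
    have hlim : Tendsto (fun n : ℕ => 1 / (d - c^2 * (1/(n:ℝ)))) atTop (𝓝 (1/d)) :=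
      tendsto_const_nhds.div hden hd.ne'
    refine hlim.congr' ?_
    filter_upwards [eventually_ge_atTop N] with n hn
    have hn1 : 1 ≤ n := hN1.trans hn
    have hn1' : (1:ℝ) ≤ (n:ℝ) := by exact_mod_cast hn1
    have hn0 : (0:ℝ) < (n:ℝ) := by linarith
    have hnc : (0:ℝ) < (n:ℝ) + c := by linarith
    have hΔu : u (n+1) - u n = v n * ((n:ℝ) / (((n:ℝ)+c)^2)) := by
      have h1 : u (n+1) = u n + v (n+1) / ((n:ℝ)+1) := by
        have := u_succ (q := q) hp0 hn1
        simp only [hudef, hvdef, hadef]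
        push_cast
        exact this
      rw [h1, hvrec n hn1]
      have hne1 : ((n:ℝ)+1) ≠ 0 := by positivity
      field_simp
      ring
    rw [hΔu, hΔv n hn1, mul_div_mul_left _ _ (hvpos n hn1).ne']
    have hd2 : (0:ℝ) < (n:ℝ)*d - c^2 := hnd n hn
    rw [div_div_div_cancel_right₀ (pow_pos hnc 2).ne']
    have hden2 : d - c^2 * (1/(n:ℝ)) = ((n:ℝ)*d - c^2)/(n:ℝ) := by
      field_simp [hn0.ne']
    rw [hden2, one_div_div]
  -- Stolz-Cesaro
  have hst : Tendsto (fun n => u n / v n) atTop (𝓝 (1/d)) :=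
    stolzCesaro hvtop (eventually_atTop.2 ⟨N, hmono⟩) hratio
  -- conclusion
  have hfin : Tendsto (fun n : ℕ => Real.sqrt (d * (u n / v n))) atTop (𝓝 1) := by
    have := ((tendsto_const_nhds : Tendsto (fun _ : ℕ => d) atTop (𝓝 d)).mul hst).sqrt
    rwa [mul_one_div, div_self hd.ne', Real.sqrt_one] at this
  refine hfin.congr' ?_
  filter_upwards [eventually_ge_atTop 1] with n hn
  have hn0 : (0:ℝ) < (n:ℝ) := by exact_mod_cast hn
  have hupos : (0:ℝ) < u n := u_pos hq0 hq1 n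
  have harg : d * (u n / v n) = (a n)^2 * (u n * (d/(n:ℝ))) := by
    rw [hvdef]
    have hane : a n ≠ 0 := (ha n).ne'
    field_simp
  rw [harg, Real.sqrt_mul (sq_nonneg _), Real.sqrt_sq (ha n).le,
    Real.sqrt_mul hupos.le, show d/(n:ℝ) = ((n:ℝ)/d)⁻¹ by rw [inv_div],
    Real.sqrt_inv]
  ring


lemma case_eq {q : ℝ} (hq0 : 0 < q) (hq1 : q < 1) :
    Tendsto (fun n : ℕ =>
        aERW (3/4) n * Real.sqrt (sSqERW (3/4) q n) / Real.sqrt ((n : ℝ) * Real.log n))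
      atTop (nhds 1) := by
  have hp0 : (0:ℝ) < 3/4 := by norm_num
  set a : ℕ → ℝ := aERW (3/4) with hadef
  set u : ℕ → ℝ := sSqERW (3/4) q with hudef
  set v : ℕ → ℝ := fun n => (n:ℝ) / (a n)^2 with hvdef
  have ha : ∀ n, 0 < a n := aERW_pos hp0
  have hvpos : ∀ n : ℕ, 1 ≤ n → 0 < v n := by
    intro n hn
    have : (0:ℝ) < (n:ℝ) := by exact_mod_cast hn
    exact div_pos this (pow_pos (ha n) 2)
  have hvrec2 : ∀ n : ℕ, 1 ≤ n →
      v (n+1) = v n * (1 - 1/(2*(n:ℝ)+1)^2) := by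
    intro n hn
    have hn1 : (1:ℝ) ≤ (n:ℝ) := by exact_mod_cast hn
    have h1 : v (n+1) = v n * (((n:ℝ) * ((n:ℝ)+1)) / (((n:ℝ) + (2*(3/4:ℝ)-1))^2)) := by
      have := v_succ (p := 3/4) hp0 hn
      simp only [hvdef, hadef]
      push_cast
      exact this
    rw [h1]
    congr 1
    have h2 : ((n:ℝ) + (2*(3/4:ℝ)-1)) ≠ 0 := by norm_num; linarith
    have h3 : (2*(n:ℝ)+1) ≠ 0 := by linarith
    field_simp
    ring
  have hanti : ∀ n : ℕ, 1 ≤ n → v (n+1) ≤ v n := by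
    intro n hn
    rw [hvrec2 n hn]
    have hn1 : (1:ℝ) ≤ (n:ℝ) := by exact_mod_cast hn
    have h1 : 1 - 1/(2*(n:ℝ)+1)^2 ≤ 1 := by
      have : (0:ℝ) < (2*(n:ℝ)+1)^2 := by positivity
      have : (0:ℝ) ≤ 1/(2*(n:ℝ)+1)^2 := by positivity
      linarith
    exact mul_le_of_le_one_right (hvpos n hn).le h1
  have hexp : ∀ x : ℝ, 0 ≤ x → x ≤ 1/2 → Real.exp (-(2*x)) ≤ 1 - x := by
    intro x hx0 hx2
    have h1 : 1 + 2*x ≤ Real.exp (2*x) := by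
      have := Real.add_one_le_exp (2*x); linarith
    have hp1 : (0:ℝ) < 1 + 2*x := by linarith
    have h2 : Real.exp (-(2*x)) ≤ 1/(1+2*x) := by
      rw [Real.exp_neg, inv_eq_one_div]
      exact one_div_le_one_div_of_le hp1 h1
    have h3 : 1/(1+2*x) ≤ 1 - x := by
      rw [div_le_iff₀ hp1]
      nlinarith
    linarith
  have htel : ∀ n : ℕ, ∑ i ∈ range n, (1:ℝ)/(((i:ℝ)+1)*((i:ℝ)+2)) = 1 - 1/((n:ℝ)+1) := by
    intro n
    induction n with
    | zero => simp
    | succ n ih =>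
      rw [Finset.sum_range_succ, ih]
      push_cast
      have h1 : ((n:ℝ)+1) ≠ 0 := by positivity
      have h2 : ((n:ℝ)+2) ≠ 0 := by positivity
      field_simp
      ring
  have hsum_le : ∀ n : ℕ, ∑ i ∈ range n, (1:ℝ)/(2*(i:ℝ)+3)^2 ≤ 1 := by
    intro n
    have h1 : ∑ i ∈ range n, (1:ℝ)/(2*(i:ℝ)+3)^2 ≤
        ∑ i ∈ range n, (1:ℝ)/(((i:ℝ)+1)*((i:ℝ)+2)) := by
      apply Finset.sum_le_sum
      intro i _
      apply one_div_le_one_div_of_le (by positivity)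
      nlinarith [Nat.cast_nonneg (α := ℝ) i]
    rw [htel n] at h1
    have h2 : (0:ℝ) ≤ 1/((n:ℝ)+1) := by positivity
    linarith
  have hsum_nonneg : ∀ n : ℕ, (0:ℝ) ≤ ∑ i ∈ range n, (1:ℝ)/(2*(i:ℝ)+3)^2 :=
    fun n => Finset.sum_nonneg fun i _ => by positivity
  have hv1 : v 1 = 1 := by
    simp [hvdef, hadef, aERW]
  have hlb1 : ∀ n : ℕ,
      Real.exp (-(2 * ∑ i ∈ range n, (1:ℝ)/(2*(i:ℝ)+3)^2)) ≤ v (n+1) := by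
    intro n
    induction n with
    | zero => simp [hv1]
    | succ n ih =>
      rw [hvrec2 (n+1) (by omega)]
      have hcast : 2*((n:ℝ)+1)+1 = 2*(n:ℝ)+3 := by ring
      have hcast2 : ((n+1 : ℕ):ℝ) = (n:ℝ)+1 := by push_cast; ring
      rw [hcast2, hcast]
      set x : ℝ := 1/(2*(n:ℝ)+3)^2 with hxdef
      have hx0 : 0 ≤ x := by positivity
      have hx2 : x ≤ 1/2 := by
        rw [hxdef]
        rw [div_le_div_iff₀ (by positivity) (by norm_num)]
        nlinarith [Nat.cast_nonneg (α := ℝ) n]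
      have hmul := mul_le_mul ih (hexp x hx0 hx2) (Real.exp_pos _).le
        (hvpos (n+1) (by omega)).le
      have hsplit : Real.exp (-(2 * ∑ i ∈ range (n+1), (1:ℝ)/(2*(i:ℝ)+3)^2))
          = Real.exp (-(2 * ∑ i ∈ range n, (1:ℝ)/(2*(i:ℝ)+3)^2)) * Real.exp (-(2*x)) := by
        rw [← Real.exp_add, Finset.sum_range_succ, hxdef]
        congr 1
        ring
      rw [hsplit]
      exact hmul
  have hδ : ∀ n : ℕ, 1 ≤ n → Real.exp (-2) ≤ v n := by
    intro n hn
    obtain ⟨m, rfl⟩ : ∃ m, n = m + 1 := ⟨n - 1, by omega⟩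
    refine le_trans ?_ (hlb1 m)
    apply Real.exp_le_exp.mpr
    have := hsum_le m
    linarith
  set V : ℕ → ℝ := fun m => v (m+1) with hVdef
  have hVanti : Antitone V := antitone_nat_of_succ_le (fun m => hanti (m+1) (by omega))
  have hbdd : BddBelow (Set.range V) := by
    refine ⟨Real.exp (-2), ?_⟩
    rintro x ⟨m, rfl⟩
    exact hδ (m+1) (by omega)
  have hVlim : Tendsto V atTop (𝓝 (⨅ m, V m)) := tendsto_atTop_ciInf hVanti hbdd
  set ℓ : ℝ := ⨅ m, V m with hℓdef
  have hℓ : Real.exp (-2) ≤ ℓ := le_ciInf (fun m => hδ (m+1) (by omega))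
  have hℓpos : 0 < ℓ := lt_of_lt_of_le (Real.exp_pos _) hℓ
  have hvlim : Tendsto v atTop (𝓝 ℓ) := (tendsto_add_atTop_iff_nat 1).1 hVlim
  have hlogtop : Tendsto (fun n : ℕ => Real.log n) atTop atTop :=
    Real.tendsto_log_atTop.comp tendsto_natCast_atTop_atTop
  have hlogmono : ∀ᶠ n in atTop, Real.log (n : ℕ) < Real.log ((n:ℕ)+1 : ℕ) := by
    filter_upwards [eventually_ge_atTop 1] with n hn
    have hn0 : (0:ℝ) < (n:ℝ) := by exact_mod_cast hn
    apply Real.log_lt_log hn0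
    push_cast
    linarith
  have hC : Tendsto (fun n : ℕ => ((n:ℝ)+1) * Real.log (1 + 1/(n:ℝ))) atTop (𝓝 1) := by
    have hx : Tendsto (fun n : ℕ => (n:ℝ) * Real.log (1 + 1/(n:ℝ))) atTop (𝓝 1) := by
      have := (Real.tendsto_mul_log_one_add_div_atTop 1).comp
        (tendsto_natCast_atTop_atTop (R := ℝ))
      simpa [Function.comp_def] using this
    have hlog0 : Tendsto (fun n : ℕ => Real.log (1 + 1/(n:ℝ))) atTop (𝓝 0) := by
      have h1 : Tendsto (fun n : ℕ => 1 + 1/(n:ℝ)) atTop (𝓝 1) := by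
        have := tendsto_one_div_atTop_nhds_zero_nat (𝕜 := ℝ)
        have h2 := (tendsto_const_nhds (x := (1:ℝ)) (f := atTop (α := ℕ))).add this
        rwa [add_zero] at h2
      have h3 := ((Real.continuousAt_log one_ne_zero).tendsto).comp h1
      simpa [Real.log_one, Function.comp_def] using h3
    have := hx.add hlog0
    rw [add_zero] at this
    refine this.congr fun n => ?_
    ring
  have hratio : Tendsto (fun n : ℕ =>
      (u (n+1) - u n) / (Real.log ((n+1 : ℕ)) - Real.log (n : ℕ))) atTop (𝓝 ℓ) := by
    have hdiv : Tendsto (fun n : ℕ => V n / (((n:ℝ)+1) * Real.log (1 + 1/(n:ℝ))))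
        atTop (𝓝 ℓ) := by
      have := hVlim.div hC one_ne_zero
      rwa [div_one] at this
    refine hdiv.congr' ?_
    filter_upwards [eventually_ge_atTop 1] with n hn
    have hn0 : (0:ℝ) < (n:ℝ) := by exact_mod_cast hn
    have hΔu : u (n+1) - u n = v (n+1)/((n:ℝ)+1) := by
      have h1 : u (n+1) = u n + (((n:ℝ) + 1) / (a (n+1))^2) / ((n:ℝ) + 1) := by
        have := u_succ (p := (3/4:ℝ)) (q := q) hp0 hn
        simp only [hudef, hadef]
        exact this
      rw [h1]
      have : v (n+1) = ((n:ℝ)+1) / (a (n+1))^2 := by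
        rw [hvdef]
        push_cast
        ring_nf
      rw [this]
      ring
    have hlogdiff : Real.log ((n+1 : ℕ)) - Real.log (n : ℕ) = Real.log (1 + 1/(n:ℝ)) := by
      push_cast
      rw [← Real.log_div (by positivity) hn0.ne']
      congr 1
      field_simp
    rw [hΔu, hlogdiff]
    have hvn1 : v (n+1) = ((n:ℝ)+1) / (a (n+1))^2 := by
      rw [hvdef]
      push_cast
      ring
    have hL : Real.log (1 + 1/(n:ℝ)) ≠ 0 := by
      apply ne_of_gt
      apply Real.log_pos
      have : (0:ℝ) < 1/(n:ℝ) := by positivity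
      linarith
    have hane : a (n+1) ≠ 0 := (ha (n+1)).ne'
    have hn1ne : ((n:ℝ)+1) ≠ 0 := by positivity
    rw [hvn1]
    show (((n+1:ℕ):ℝ) / (a (n + 1))^2) / (((n:ℝ) + 1) * Real.log (1 + 1 / (n:ℝ))) = _
    push_cast
    field_simp
  have hst : Tendsto (fun n : ℕ => u n / Real.log (n : ℕ)) atTop (𝓝 ℓ) :=
    stolzCesaro hlogtop hlogmono hratio
  have hinv : Tendsto (fun n : ℕ => 1 / v n) atTop (𝓝 (1/ℓ)) :=
    tendsto_const_nhds.div hvlim hℓpos.ne'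
  have hfin : Tendsto (fun n : ℕ =>
      Real.sqrt ((u n / Real.log (n : ℕ)) * (1 / v n))) atTop (𝓝 1) := by
    have := (hst.mul hinv).sqrt
    rwa [mul_one_div, div_self hℓpos.ne', Real.sqrt_one] at this
  refine hfin.congr' ?_
  filter_upwards [eventually_ge_atTop 2] with n hn
  have hn1 : (1:ℝ) < (n:ℝ) := by exact_mod_cast hn
  have hn0 : (0:ℝ) < (n:ℝ) := by linarith
  have hlogpos : 0 < Real.log (n : ℕ) := Real.log_pos hn1
  have hupos : (0:ℝ) < u n := u_pos hq0 hq1 n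
  have harg : (u n / Real.log (n:ℕ)) * (1 / v n)
      = (a n)^2 * (u n / ((n:ℝ) * Real.log (n:ℕ))) := by
    rw [hvdef]
    have hane : a n ≠ 0 := (ha n).ne'
    field_simp
  rw [harg, Real.sqrt_mul (sq_nonneg _), Real.sqrt_sq (ha n).le,
    Real.sqrt_div hupos.le, mul_div_assoc]

end ERWAsymptotics

/-- `a_n s_n ~ sqrt(n/(3-4p))` for `p < 3/4` and `a_n s_n ~ sqrt(n log n)` at
`p = 3/4`. -/
theorem aERW_mul_s_asymptotic {p q : ℝ} (hp : p ∈ Set.Ioo (0 : ℝ) 1) (hp' : p ≤ 3 / 4)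
    (hq : q ∈ Set.Ioo (0 : ℝ) 1) :
    (p < 3 / 4 →
      Tendsto (fun n : ℕ =>
          aERW p n * Real.sqrt (sSqERW p q n) / Real.sqrt ((n : ℝ) / (3 - 4 * p)))
        atTop (nhds 1)) ∧
    (p = 3 / 4 →
      Tendsto (fun n : ℕ =>
          aERW p n * Real.sqrt (sSqERW p q n) / Real.sqrt ((n : ℝ) * Real.log n))
        atTop (nhds 1)) := by
  constructor
  · intro h
    exact case_lt hp.1 h hq.1 hq.2
  · intro h
    subst h
    exact case_eq hq.1 hq.2
end
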